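/- arXiv:2305.01721 — 2 statements merged into one kernel-verified Lean document; each statement's English description precedes it below -/
import Mathlib

section
/- Let S be a decision rule system with n(S) > 0. Then max{d(S), β_AR(S)} ≤ h_AR(S) ≤ d(S)·β_AR⁺(S). -/
/- Common formal framework for decision rule systems and decision trees /
   acyclic decision graphs, following Durdymyradov & Moshkov. -/

attribute [local instance] Classical.propDecidable

noncomputable section

namespace DRS

/-- A decision rule `(a_{i₁}=δ₁) ∧ ⋯ ∧ (a_{i_m}=δ_m) → σ`:
`K` is the finite set of equations (attribute index, value), `rhs` is σ. -/
structure Rule where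
  K : Finset (ℕ × ℕ)
  rhs : ℕ

/-- Well-formedness of a rule: the attributes on its left-hand side are pairwise different. -/
def Rule.WF (r : Rule) : Prop := ∀ p ∈ r.K, ∀ q ∈ r.K, p.1 = q.1 → p = q

/-- A(r): the set of attributes of a rule. -/
def Rule.attrs (r : Rule) : Finset ℕ := r.K.image Prod.fst

/-- The length m of a rule. -/
def Rule.len (r : Rule) : ℕ := r.K.card

/-- A(S) -/
def attrs (S : Finset Rule) : Finset ℕ := S.biUnion Rule.attrs

/-- n(S) -/
def nPar (S : Finset Rule) : ℕ := (attrs S).card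

/-- d(S): the maximum length of a rule of S. -/
def dPar (S : Finset Rule) : ℕ := S.sup Rule.len

/-- D(S): the set of right-hand sides. -/
def rhsSet (S : Finset Rule) : Finset ℕ := S.image Rule.rhs

/-- V_S(a_i) -/
def VS (S : Finset Rule) (i : ℕ) : Finset ℕ :=
  ((S.biUnion Rule.K).filter fun p => p.1 = i).image Prod.snd

/-- k(S) -/
def kPar (S : Finset Rule) : ℕ := (attrs S).sup fun i => (VS S i).card

/-- Attribute values in trees are `Option ℕ`; `none` plays the role of the special value `*`.
`allowed S false i` is (the lift of) `V_S(a_i)`, and `allowed S true i` is `EV_S(a_i)`. -/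
def allowed (S : Finset Rule) (ext : Bool) (i : ℕ) : Finset (Option ℕ) :=
  (VS S i).image some ∪ (if ext then {none} else ∅)

/-- Consistency of an equation system over ω ∪ {*}. -/
def ConsistentE (E : Finset (ℕ × Option ℕ)) : Prop :=
  ∀ p ∈ E, ∀ q ∈ E, p.1 = q.1 → p.2 = q.2

/-- Lift the left-hand side of a rule to an equation system over ω ∪ {*}. -/
def liftK (K : Finset (ℕ × ℕ)) : Finset (ℕ × Option ℕ) :=
  K.image fun p => (p.1, some p.2)

/-- A finite directed labeled graph: the nodes are `0, …, n-1`, with a distinguished root,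
each node carries either an attribute (working node) or a set of rules (terminal node),
and edges are labeled with elements of ω ∪ {*}. -/
structure DGraph where
  n : ℕ
  root : ℕ
  label : ℕ → ℕ ⊕ Finset Rule
  edges : Finset (ℕ × Option ℕ × ℕ)

namespace DGraph

def step (G : DGraph) (u v : ℕ) : Prop := ∃ l, (u, l, v) ∈ G.edges

/-- The graph has no directed cycles. -/
def Acyclic (G : DGraph) : Prop := ∀ v, ¬ Relation.TransGen G.step v v

/-- A node is terminal if no edge leaves it. -/
def IsTerminal (G : DGraph) (v : ℕ) : Prop := ∀ e ∈ G.edges, e.1 ≠ v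

/-- The set of rules attached to a (terminal) node. -/
def termSet (G : DGraph) (v : ℕ) : Finset Rule :=
  Sum.elim (fun _ => (∅ : Finset Rule)) id (G.label v)

/-- `G` is an acyclic decision graph over the rule system `S`;
`ext = false` : branching over `V_S` (o-type), `ext = true` : branching over `EV_S` (e-type).
Terminal nodes are labeled with subsets of S; each working node is labeled with an
attribute `a` of `A(S)` and has exactly one leaving edge for every element of
`V_S(a)` (resp. `EV_S(a)`), the edges leaving it being labeled with these
pairwise different elements. -/
def IsDG (G : DGraph) (S : Finset Rule) (ext : Bool) : Prop :=
  G.root < G.n ∧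
  (∀ e ∈ G.edges, e.1 < G.n ∧ e.2.2 < G.n) ∧
  G.Acyclic ∧
  (∀ v < G.n,
    if G.IsTerminal v then
      ∃ Z : Finset Rule, G.label v = Sum.inr Z ∧ Z ⊆ S
    else
      ∃ a : ℕ, G.label v = Sum.inl a ∧ a ∈ attrs S ∧
        (∀ l : Option ℕ, (∃ w, (v, l, w) ∈ G.edges) ↔ l ∈ allowed S ext a) ∧
        (∀ l w w', (v, l, w) ∈ G.edges → (v, l, w') ∈ G.edges → w = w'))

/-- `G` is a finite directed tree with root: the root has no entering edge and every
other node has exactly one entering edge (together with acyclicity this makes the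
graph a rooted tree). -/
def IsTree (G : DGraph) : Prop :=
  (∀ e ∈ G.edges, e.2.2 ≠ G.root) ∧
  (∀ v < G.n, v ≠ G.root → ∃! e, e ∈ G.edges ∧ e.2.2 = v)

/-- `chainFrom G v p t`: the list `p` of (node, leaving-edge-label) pairs forms a
directed path in `G` starting at `v` and ending at `t`. -/
def chainFrom (G : DGraph) : ℕ → List (ℕ × Option ℕ) → ℕ → Prop
  | v, [], t => v = t
  | v, e :: rest, t => e.1 = v ∧ ∃ w, (v, e.2, w) ∈ G.edges ∧ chainFrom G w rest t

/-- A complete path: from the root to a terminal node; it is recorded by the list of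
its working nodes with the labels of the edges taken, together with its terminal node. -/
def IsCompletePath (G : DGraph) (p : List (ℕ × Option ℕ)) (t : ℕ) : Prop :=
  G.chainFrom G.root p t ∧ G.IsTerminal t ∧ t < G.n

/-- K(ξ): the equation system associated with a complete path. -/
def pathEqs (G : DGraph) (p : List (ℕ × Option ℕ)) : Finset (ℕ × Option ℕ) :=
  (p.filterMap fun e =>
    Sum.elim (fun a => some (a, e.2)) (fun _ => none) (G.label e.1)).toFinset

/-- L(Γ): the number of nodes. -/
def size (G : DGraph) : ℕ := G.n

/-- T(Γ): the number of terminal nodes labeled with pairwise different sets of rules. -/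
def tCount (G : DGraph) : ℕ :=
  (((Finset.range G.n).filter fun v => G.IsTerminal v).image fun v => G.termSet v).card

/-- h(Γ): the maximum number of working nodes on a complete path. -/
def depth (G : DGraph) : ℕ :=
  sSup {m | ∃ p t, G.IsCompletePath p t ∧ p.length = m}

/-- Path conditions for (the solutions of) the problems All Rules / EAll Rules. -/
def SolvesAR (G : DGraph) (S : Finset Rule) : Prop :=
  ∀ p t, G.IsCompletePath p t → ConsistentE (G.pathEqs p) →
    (∀ r ∈ G.termSet t, liftK r.K ⊆ G.pathEqs p) ∧
    (∀ r ∈ S, r ∉ G.termSet t → ¬ ConsistentE (liftK r.K ∪ G.pathEqs p))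

/-- Path conditions for the problems All Decisions / EAll Decisions. -/
def SolvesAD (G : DGraph) (S : Finset Rule) : Prop :=
  ∀ p t, G.IsCompletePath p t → ConsistentE (G.pathEqs p) →
    (∀ r ∈ G.termSet t, liftK r.K ⊆ G.pathEqs p) ∧
    (∀ r ∈ S, r ∉ G.termSet t → r.rhs ∉ (G.termSet t).image Rule.rhs →
      ¬ ConsistentE (liftK r.K ∪ G.pathEqs p))

/-- Path conditions for the problems Some Rules / ESome Rules. -/
def SolvesSR (G : DGraph) (S : Finset Rule) : Prop :=
  ∀ p t, G.IsCompletePath p t → ConsistentE (G.pathEqs p) →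
    (∀ r ∈ G.termSet t, liftK r.K ⊆ G.pathEqs p) ∧
    (G.termSet t = ∅ → ∀ r ∈ S, ¬ ConsistentE (liftK r.K ∪ G.pathEqs p))

end DGraph

/-- Γ is a decision tree over S solving AR(S) (an o-tree). -/
def TreeSolvesAR (S : Finset Rule) (G : DGraph) : Prop :=
  G.IsDG S false ∧ G.IsTree ∧ G.SolvesAR S
/-- Γ is a decision tree over S solving EAR(S) (an e-tree). -/
def TreeSolvesEAR (S : Finset Rule) (G : DGraph) : Prop :=
  G.IsDG S true ∧ G.IsTree ∧ G.SolvesAR S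
/-- Γ is a decision tree over S solving AD(S) (an o-tree). -/
def TreeSolvesAD (S : Finset Rule) (G : DGraph) : Prop :=
  G.IsDG S false ∧ G.IsTree ∧ G.SolvesAD S
/-- Γ is a decision tree over S solving EAD(S) (an e-tree). -/
def TreeSolvesEAD (S : Finset Rule) (G : DGraph) : Prop :=
  G.IsDG S true ∧ G.IsTree ∧ G.SolvesAD S
/-- Γ is a decision tree over S solving SR(S) (an o-tree). -/
def TreeSolvesSR (S : Finset Rule) (G : DGraph) : Prop :=
  G.IsDG S false ∧ G.IsTree ∧ G.SolvesSR S
/-- Γ is a decision tree over S solving ESR(S) (an e-tree). -/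
def TreeSolvesESR (S : Finset Rule) (G : DGraph) : Prop :=
  G.IsDG S true ∧ G.IsTree ∧ G.SolvesSR S

/-- L_AR(S): minimum number of nodes of a decision tree over S solving AR(S). -/
def L_AR (S : Finset Rule) : ℕ := sInf {m | ∃ G : DGraph, TreeSolvesAR S G ∧ G.size = m}
def L_EAR (S : Finset Rule) : ℕ := sInf {m | ∃ G : DGraph, TreeSolvesEAR S G ∧ G.size = m}
def L_AD (S : Finset Rule) : ℕ := sInf {m | ∃ G : DGraph, TreeSolvesAD S G ∧ G.size = m}
def L_EAD (S : Finset Rule) : ℕ := sInf {m | ∃ G : DGraph, TreeSolvesEAD S G ∧ G.size = m}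
def L_SR (S : Finset Rule) : ℕ := sInf {m | ∃ G : DGraph, TreeSolvesSR S G ∧ G.size = m}
def L_ESR (S : Finset Rule) : ℕ := sInf {m | ∃ G : DGraph, TreeSolvesESR S G ∧ G.size = m}

/-- T_AR(S): minimum number of differently-labeled terminal nodes of a decision tree
over S solving AR(S); similarly for the other problems. -/
def T_AR (S : Finset Rule) : ℕ := sInf {m | ∃ G : DGraph, TreeSolvesAR S G ∧ G.tCount = m}
def T_EAR (S : Finset Rule) : ℕ := sInf {m | ∃ G : DGraph, TreeSolvesEAR S G ∧ G.tCount = m}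
def T_AD (S : Finset Rule) : ℕ := sInf {m | ∃ G : DGraph, TreeSolvesAD S G ∧ G.tCount = m}
def T_EAD (S : Finset Rule) : ℕ := sInf {m | ∃ G : DGraph, TreeSolvesEAD S G ∧ G.tCount = m}
def T_SR (S : Finset Rule) : ℕ := sInf {m | ∃ G : DGraph, TreeSolvesSR S G ∧ G.tCount = m}
def T_ESR (S : Finset Rule) : ℕ := sInf {m | ∃ G : DGraph, TreeSolvesESR S G ∧ G.tCount = m}

/-- h_AR(S): minimum depth of a decision tree over S solving AR(S); similarly for the others. -/
def h_AR (S : Finset Rule) : ℕ := sInf {m | ∃ G : DGraph, TreeSolvesAR S G ∧ G.depth = m}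
def h_EAR (S : Finset Rule) : ℕ := sInf {m | ∃ G : DGraph, TreeSolvesEAR S G ∧ G.depth = m}
def h_AD (S : Finset Rule) : ℕ := sInf {m | ∃ G : DGraph, TreeSolvesAD S G ∧ G.depth = m}
def h_EAD (S : Finset Rule) : ℕ := sInf {m | ∃ G : DGraph, TreeSolvesEAD S G ∧ G.depth = m}
def h_SR (S : Finset Rule) : ℕ := sInf {m | ∃ G : DGraph, TreeSolvesSR S G ∧ G.depth = m}
def h_ESR (S : Finset Rule) : ℕ := sInf {m | ∃ G : DGraph, TreeSolvesESR S G ∧ G.depth = m}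

/-- L^DG_SR(S): minimum number of nodes of an acyclic decision graph solving SR(S). -/
def LDG_SR (S : Finset Rule) : ℕ :=
  sInf {m | ∃ G : DGraph, G.IsDG S false ∧ G.SolvesSR S ∧ G.size = m}
/-- L^DG_ESR(S): minimum number of nodes of an acyclic decision graph solving ESR(S). -/
def LDG_ESR (S : Finset Rule) : ℕ :=
  sInf {m | ∃ G : DGraph, G.IsDG S true ∧ G.SolvesSR S ∧ G.size = m}

/-- A node cover of the hypergraph G(S). -/
def IsNodeCover (S : Finset Rule) (B : Finset ℕ) : Prop :=
  B ⊆ attrs S ∧ ∀ r ∈ S, (Rule.attrs r).Nonempty → (Rule.attrs r ∩ B).Nonempty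

/-- β(S): the minimum cardinality of a node cover of the hypergraph G(S). -/
def beta (S : Finset Rule) : ℕ := sInf {c | ∃ B, IsNodeCover S B ∧ B.card = c}

/-- S⁺: the subsystem of S consisting of all rules of length d(S). -/
def Splus (S : Finset Rule) : Finset Rule := S.filter fun r => r.len = dPar S

/-- β⁺(S) = β(S⁺). -/
def betaPlus (S : Finset Rule) : ℕ := beta (Splus S)

/-- The rule r_α : delete from the left-hand side of r all equations belonging to α. -/
def Rule.restrict (r : Rule) (α : Finset (ℕ × Option ℕ)) : Rule :=
  ⟨r.K.filter fun p => (p.1, some p.2) ∉ α, r.rhs⟩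

/-- S_α : the system of the rules r_α for all r ∈ S with K(r) ∪ α consistent. -/
def restrict (S : Finset Rule) (α : Finset (ℕ × Option ℕ)) : Finset Rule :=
  (S.filter fun r => ConsistentE (liftK r.K ∪ α)).image fun r => r.restrict α

/-- E_C(S): consistent equation systems whose attributes are in A(S) and whose
values belong to V_S (ext = false) resp. EV_S (ext = true). -/
def ESys (S : Finset Rule) (ext : Bool) : Set (Finset (ℕ × Option ℕ)) :=
  {α | ConsistentE α ∧ ∀ p ∈ α, p.1 ∈ attrs S ∧ p.2 ∈ allowed S ext p.1}

/-- I_SR(S). -/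
def I_SR (S : Finset Rule) : Finset Rule :=
  if ∃ r ∈ S, r.len = 0 then S.filter fun r => r.len = 0 else S

/-- D₀(S): the right-hand sides of the rules of S of length 0. -/
def D0 (S : Finset Rule) : Finset ℕ := (S.filter fun r => r.len = 0).image Rule.rhs

/-- I_AD(S). -/
def I_AD (S : Finset Rule) : Finset Rule :=
  S.filter fun r => r.len = 0 ∨ r.rhs ∉ D0 S

def betaC (S : Finset Rule) (ext : Bool) : ℕ :=
  sSup {b | ∃ α ∈ ESys S ext, beta (restrict S α) = b}
def betaCplus (S : Finset Rule) (ext : Bool) : ℕ :=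
  sSup {b | ∃ α ∈ ESys S ext, betaPlus (restrict S α) = b}
def betaI (S : Finset Rule) (I : Finset Rule → Finset Rule) : ℕ :=
  sSup {b | ∃ α ∈ ESys S true, beta (I (restrict S α)) = b}
def betaIplus (S : Finset Rule) (I : Finset Rule → Finset Rule) : ℕ :=
  sSup {b | ∃ α ∈ ESys S true, betaPlus (I (restrict S α)) = b}

def beta_AR (S : Finset Rule) : ℕ := betaC S false
def beta_AD (S : Finset Rule) : ℕ := betaC S false
def beta_SR (S : Finset Rule) : ℕ := betaC S false
def beta_EAR (S : Finset Rule) : ℕ := betaC S true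
def beta_ARplus (S : Finset Rule) : ℕ := betaCplus S false
def beta_ADplus (S : Finset Rule) : ℕ := betaCplus S false
def beta_SRplus (S : Finset Rule) : ℕ := betaCplus S false
def beta_EARplus (S : Finset Rule) : ℕ := betaCplus S true
def beta_EAD (S : Finset Rule) : ℕ := betaI S I_AD
def beta_EADplus (S : Finset Rule) : ℕ := betaIplus S I_AD
def beta_ESR (S : Finset Rule) : ℕ := betaI S I_SR
def beta_ESRplus (S : Finset Rule) : ℕ := betaIplus S I_SR

/-- R_SR(S). -/
def R_SR (S : Finset Rule) : Finset Rule :=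
  S.filter fun r => ¬ ∃ r' ∈ S, r'.K ⊂ r.K

/-- R_AD(S). -/
def R_AD (S : Finset Rule) : Finset Rule :=
  S.filter fun r => ¬ ∃ r' ∈ S, r'.K ⊂ r.K ∧ r'.rhs = r.rhs

/-- A reduced decision rule system. -/
def Reduced (S : Finset Rule) : Prop :=
  attrs S ⊆ Finset.range (nPar S + 1) ∧
  rhsSet S ⊆ Finset.range ((rhsSet S).card + 1) ∧
  (∀ i ∈ attrs S, VS S i ⊆ Finset.range (kPar S + 1)) ∧
  1 ≤ dPar S

/-- Length of the binary representation of a natural number. -/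
def bitLen (m : ℕ) : ℕ := max 1 (Nat.size m)

/-- The length of the word "(a⟨i⟩=⟨δ⟩)" encoding one equation. -/
def eqLen (p : ℕ × ℕ) : ℕ := 4 + bitLen p.1 + bitLen p.2

/-- The length of the word encoding one rule (with the "∧" signs and "→"). -/
def Rule.wordLen (r : Rule) : ℕ :=
  (∑ p ∈ r.K, eqLen p) + (r.K.card - 1) + 1 + bitLen r.rhs

/-- size(S): the length of the word representing S (with ";" separating the rules). -/
def sizeS (S : Finset Rule) : ℕ := (∑ r ∈ S, r.wordLen) + (S.card - 1)
inductive PT where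
  | leaf : Finset Rule → PT
  | node : ℕ → List ℕ → (ℕ → PT) → PT

def PT.depth : PT → ℕ
  | leaf _ => 0
  | node _ vals c => 1 + (vals.map fun δ => (c δ).depth).foldr max 0

def PT.sub : PT → List ℕ → Option PT
  | t, [] => some t
  | leaf _, _ :: _ => none
  | node _ vals c, δ :: L => if δ ∈ vals then (c δ).sub L else none

def PT.positions : PT → Finset (List ℕ)
  | leaf _ => {[]}
  | node _ vals c => insert [] (vals.toFinset.biUnion fun δ => ((c δ).positions).image (δ :: ·))

lemma PT.sub_append (t : PT) (L M : List ℕ) :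
    t.sub (L ++ M) = (t.sub L).bind (fun t' => t'.sub M) := by
  induction L generalizing t with
  | nil => simp [PT.sub]
  | cons δ L ih =>
    cases t with
    | leaf Z => simp [PT.sub]
    | node a vals c =>
      by_cases h : δ ∈ vals <;> simp [PT.sub, h, ih]

lemma PT.mem_positions_iff (t : PT) (L : List ℕ) :
    L ∈ t.positions ↔ (t.sub L).isSome := by
  induction t generalizing L with
  | leaf Z => cases L <;> simp [PT.positions, PT.sub]
  | node a vals c ih =>
    cases L with
    | nil => simp [PT.positions, PT.sub]
    | cons δ L =>
      by_cases h : δ ∈ vals <;> simp [PT.positions, PT.sub, h, ih]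


lemma PT.nil_mem_positions (t : PT) : [] ∈ t.positions := by
  rw [PT.mem_positions_iff]; simp [PT.sub]

lemma PT.dropLast_mem (t : PT) {L : List ℕ} {δ : ℕ} (h : L ++ [δ] ∈ t.positions) :
    L ∈ t.positions := by
  rw [PT.mem_positions_iff] at *
  rw [PT.sub_append] at h
  cases hs : t.sub L with
  | none => rw [hs] at h; simp at h
  | some t' => simp

noncomputable def PT.idx (t : PT) (L : List ℕ) : ℕ :=
  if h : L ∈ t.positions then (t.positions.equivFin ⟨L, h⟩ : Fin _) else 0

noncomputable def PT.posOf (t : PT) (v : ℕ) : List ℕ :=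
  if h : v < t.positions.card then ((t.positions.equivFin).symm ⟨v, h⟩ : {L // L ∈ t.positions}) else []

lemma PT.idx_lt (t : PT) {L : List ℕ} (h : L ∈ t.positions) : t.idx L < t.positions.card := by
  rw [PT.idx, dif_pos h]; exact (t.positions.equivFin ⟨L, h⟩).2

lemma PT.idx_eq (t : PT) {L : List ℕ} (h : L ∈ t.positions) :
    t.idx L = (t.positions.equivFin ⟨L, h⟩ : Fin _) := dif_pos h

lemma PT.posOf_eq (t : PT) {v : ℕ} (h : v < t.positions.card) :
    t.posOf v = ((t.positions.equivFin).symm ⟨v, h⟩ : {L // L ∈ t.positions}) := dif_pos h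

lemma PT.posOf_idx (t : PT) {L : List ℕ} (h : L ∈ t.positions) : t.posOf (t.idx L) = L := by
  rw [t.posOf_eq (t.idx_lt h)]
  have : (⟨t.idx L, t.idx_lt h⟩ : Fin t.positions.card) = t.positions.equivFin ⟨L, h⟩ :=
    Fin.ext (t.idx_eq h)
  rw [this]
  simp

lemma PT.posOf_mem (t : PT) {v : ℕ} (h : v < t.positions.card) : t.posOf v ∈ t.positions := by
  rw [PT.posOf, dif_pos h]; exact ((t.positions.equivFin).symm ⟨v, h⟩).2

lemma PT.idx_posOf (t : PT) {v : ℕ} (h : v < t.positions.card) : t.idx (t.posOf v) = v := by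
  rw [t.idx_eq (t.posOf_mem h)]
  have : (⟨t.posOf v, t.posOf_mem h⟩ : {L // L ∈ t.positions}) =
      (t.positions.equivFin).symm ⟨v, h⟩ := Subtype.ext (t.posOf_eq h)
  rw [this]
  simp

lemma PT.idx_inj (t : PT) {L M : List ℕ} (hL : L ∈ t.positions) (hM : M ∈ t.positions)
    (h : t.idx L = t.idx M) : L = M := by
  have := congrArg t.posOf h
  rwa [t.posOf_idx hL, t.posOf_idx hM] at this

def labelAt (t : PT) (L : List ℕ) : ℕ ⊕ Finset Rule :=
  match t.sub L with
  | some (.leaf Z) => Sum.inr Z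
  | some (.node a _ _) => Sum.inl a
  | none => Sum.inr ∅

noncomputable def toGraph (t : PT) : DGraph where
  n := t.positions.card
  root := t.idx []
  label := fun v => labelAt t (t.posOf v)
  edges := (t.positions.filter (· ≠ [])).image fun L => (t.idx L.dropLast, some (L.getLastD 0), t.idx L)

lemma edge_mem {t : PT} {u v : ℕ} {l : Option ℕ} :
    (u, l, v) ∈ (toGraph t).edges ↔
      ∃ L δ, L ∈ t.positions ∧ L ++ [δ] ∈ t.positions ∧ u = t.idx L ∧ l = some δ ∧
        v = t.idx (L ++ [δ]) := by
  constructor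
  · intro h
    simp only [toGraph, Finset.mem_image, Finset.mem_filter] at h
    obtain ⟨L₀, ⟨hL₀, hne⟩, heq⟩ := h
    obtain ⟨M, x, rfl⟩ := List.eq_nil_or_concat L₀ |>.resolve_left hne
    rw [List.concat_eq_append] at hL₀ heq
    refine ⟨M, x, t.dropLast_mem hL₀, hL₀, ?_, ?_, ?_⟩ <;>
      simp only [Prod.mk.injEq] at heq <;> simp_all [List.dropLast_concat]
  · rintro ⟨L, δ, hL, hLδ, rfl, rfl, rfl⟩
    simp only [toGraph, Finset.mem_image, Finset.mem_filter]
    exact ⟨L ++ [δ], ⟨hLδ, by simp⟩, by simp [List.dropLast_concat]⟩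


lemma mem_VS_of {S : Finset Rule} {r : Rule} {a δ : ℕ} (hr : r ∈ S) (h : (a, δ) ∈ r.K) :
    δ ∈ VS S a := by
  simp only [VS, Finset.mem_image, Finset.mem_filter, Finset.mem_biUnion]
  exact ⟨(a, δ), ⟨⟨r, hr, h⟩, rfl⟩, rfl⟩

lemma VS_nonempty {S : Finset Rule} {a : ℕ} (h : a ∈ attrs S) : (VS S a).Nonempty := by
  simp only [attrs, Finset.mem_biUnion, Rule.attrs, Finset.mem_image] at h
  obtain ⟨r, hr, ⟨b, δ⟩, hbδ, rfl⟩ := h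
  exact ⟨δ, mem_VS_of hr hbδ⟩

lemma mem_allowed_false {S : Finset Rule} {a : ℕ} {l : Option ℕ} :
    l ∈ allowed S false a ↔ ∃ δ ∈ VS S a, l = some δ := by
  simp [allowed, eq_comm]

inductive Good (S : Finset Rule) : Finset (ℕ × Option ℕ) → PT → Prop
  | leaf {E Z} : Z ⊆ S →
      (ConsistentE E → (∀ r ∈ Z, liftK r.K ⊆ E) ∧
        (∀ r ∈ S, r ∉ Z → ¬ConsistentE (liftK r.K ∪ E))) →
      Good S E (.leaf Z)
  | node {E a vals c} : a ∈ attrs S → vals.Nodup → vals.toFinset = VS S a →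
      (∀ δ ∈ vals, Good S (insert (a, some δ) E) (c δ)) →
      Good S E (.node a vals c)

lemma goodAt {S : Finset Rule} {t t' : PT} {E : Finset (ℕ × Option ℕ)} (hg : Good S E t)
    {L : List ℕ} (h : t.sub L = some t') : ∃ E', Good S E' t' := by
  induction L generalizing t E with
  | nil => simp [PT.sub] at h; exact ⟨E, h ▸ hg⟩
  | cons δ L ih =>
    cases hg with
    | leaf h1 h2 => simp [PT.sub] at h
    | @node E a vals c ha hnd hvs hc =>
      simp only [PT.sub] at h
      by_cases hδ : δ ∈ vals
      · rw [if_pos hδ] at h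
        exact ih (hc δ hδ) h
      · rw [if_neg hδ] at h; exact absurd h (by simp)

lemma toGraph_acyclic (t : PT) : (toGraph t).Acyclic := by
  have key : ∀ u v, (toGraph t).step u v → (t.posOf u).length < (t.posOf v).length := by
    rintro u v ⟨l, he⟩
    obtain ⟨L, δ, hL, hLδ, rfl, rfl, rfl⟩ := edge_mem.1 he
    rw [t.posOf_idx hL, t.posOf_idx hLδ]
    simp
  have mono : ∀ u v, Relation.TransGen (toGraph t).step u v →
      (t.posOf u).length < (t.posOf v).length := by
    intro u v h
    induction h with
    | single h => exact key _ _ h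
    | tail _ h ih => exact ih.trans (key _ _ h)
  intro v hv
  exact lt_irrefl _ (mono v v hv)

lemma posOf_sub_isSome (t : PT) {v : ℕ} (hv : v < (toGraph t).n) :
    ∃ t', t.sub (t.posOf v) = some t' := by
  have := (t.mem_positions_iff _).1 (t.posOf_mem hv)
  exact Option.isSome_iff_exists.mp this

lemma edge_src_pos {t : PT} {v : ℕ} {l : Option ℕ} {w : ℕ} (hv : v < (toGraph t).n)
    (he : (v, l, w) ∈ (toGraph t).edges) :
    ∃ δ, l = some δ ∧ t.posOf v ++ [δ] ∈ t.positions ∧ w = t.idx (t.posOf v ++ [δ]) := by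
  obtain ⟨L, δ, hL, hLδ, hu, rfl, rfl⟩ := edge_mem.1 he
  have : L = t.posOf v := by rw [hu, t.posOf_idx hL]
  subst this
  exact ⟨δ, rfl, hLδ, rfl⟩

lemma toGraph_isDG {S : Finset Rule} {t : PT} (hg : Good S ∅ t) : (toGraph t).IsDG S false := by
  refine ⟨t.idx_lt t.nil_mem_positions, ?_, toGraph_acyclic t, ?_⟩
  · rintro ⟨u, l, v⟩ he
    obtain ⟨L, δ, hL, hLδ, rfl, rfl, rfl⟩ := edge_mem.1 he
    exact ⟨t.idx_lt hL, t.idx_lt hLδ⟩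
  · intro v hv
    obtain ⟨t', hsub⟩ := posOf_sub_isSome t hv
    obtain ⟨E, hgood⟩ := goodAt hg hsub
    cases hgood with
    | @leaf E Z hZS hprop =>
      have hterm : (toGraph t).IsTerminal v := by
        rintro ⟨u, l, w⟩ he hev
        simp only at hev
        subst hev
        obtain ⟨δ, rfl, hmem, -⟩ := edge_src_pos hv he
        rw [t.mem_positions_iff, PT.sub_append, hsub] at hmem
        simp [PT.sub] at hmem
      rw [if_pos hterm]
      refine ⟨Z, ?_, hZS⟩
      show labelAt t (t.posOf v) = Sum.inr Z
      rw [labelAt, hsub]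
    | @node E a vals c ha hnd hvs hc =>
      have sub_child : ∀ δ ∈ vals, t.sub (t.posOf v ++ [δ]) = some (c δ) := by
        intro δ hδ
        rw [PT.sub_append, hsub]
        simp [PT.sub, hδ]
      have edge_of : ∀ δ ∈ vals, (v, some δ, t.idx (t.posOf v ++ [δ])) ∈ (toGraph t).edges := by
        intro δ hδ
        refine edge_mem.2 ⟨t.posOf v, δ, t.posOf_mem hv, ?_, (t.idx_posOf hv).symm, rfl, rfl⟩
        rw [t.mem_positions_iff, sub_child δ hδ]; rfl
      have hvals_ne : vals ≠ [] := by
        intro h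
        obtain ⟨δ, hδ⟩ := VS_nonempty ha
        rw [← hvs, h] at hδ; simp at hδ
      have hnterm : ¬ (toGraph t).IsTerminal v := by
        intro hterm
        obtain ⟨δ, hδ⟩ := List.exists_mem_of_ne_nil vals hvals_ne
        exact hterm _ (edge_of δ hδ) rfl
      rw [if_neg hnterm]
      refine ⟨a, ?_, ha, ?_, ?_⟩
      · show labelAt t (t.posOf v) = Sum.inl a
        rw [labelAt, hsub]
      · intro l
        constructor
        · rintro ⟨w, he⟩
          obtain ⟨δ, rfl, hmem, rfl⟩ := edge_src_pos hv he
          by_cases hδ : δ ∈ vals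
          · exact mem_allowed_false.2 ⟨δ, hvs ▸ List.mem_toFinset.2 hδ, rfl⟩
          · rw [t.mem_positions_iff, PT.sub_append, hsub] at hmem
            simp [PT.sub, hδ] at hmem
        · intro hl
          obtain ⟨δ, hδV, rfl⟩ := mem_allowed_false.1 hl
          have hδ : δ ∈ vals := List.mem_toFinset.1 (hvs ▸ hδV)
          exact ⟨_, edge_of δ hδ⟩
      · intro l w w' he he'
        obtain ⟨δ, rfl, _, rfl⟩ := edge_src_pos hv he
        obtain ⟨δ', hδδ', _, rfl⟩ := edge_src_pos hv he'
        rw [Option.some_inj] at hδδ'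
        rw [hδδ']

lemma toGraph_isTree (t : PT) : (toGraph t).IsTree := by
  constructor
  · rintro ⟨u, l, v⟩ he hev
    simp only at hev
    obtain ⟨L, δ, hL, hLδ, -, -, h⟩ := edge_mem.1 he
    rw [h] at hev
    have := t.idx_inj hLδ t.nil_mem_positions hev
    simp at this
  · intro v hv hvroot
    have hLpos := t.posOf_mem hv
    have hLne : t.posOf v ≠ [] := by
      intro h
      exact hvroot (by rw [← t.idx_posOf hv, h]; rfl)
    obtain ⟨M, x, hMx⟩ := (List.eq_nil_or_concat (t.posOf v)).resolve_left hLne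
    rw [List.concat_eq_append] at hMx
    refine ⟨(t.idx M, some x, v), ⟨?_, rfl⟩, ?_⟩
    · refine edge_mem.2 ⟨M, x, ?_, hMx ▸ hLpos, rfl, rfl, ?_⟩
      · exact t.dropLast_mem (hMx ▸ hLpos)
      · rw [← hMx, t.idx_posOf hv]
    · rintro ⟨u', l', w'⟩ ⟨he', hw'⟩
      simp only at hw'
      obtain ⟨L₀, δ₀, hL₀, hL₀δ, rfl, rfl, hw⟩ := edge_mem.1 he'
      have heq : L₀ ++ [δ₀] = M ++ [x] := by
        rw [← hMx]
        refine t.idx_inj hL₀δ hLpos ?_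
        rw [← hw, hw', t.idx_posOf hv]
      have h1 : L₀ = M := by
        have := congrArg List.dropLast heq
        simpa using this
      have h2 : δ₀ = x := by
        have := congrArg List.getLast? heq
        simpa using this
      simp only [Prod.mk.injEq]
      exact ⟨by rw [h1], by rw [h2], by rw [hw, heq, ← hMx, t.idx_posOf hv]⟩


lemma le_foldr_max {l : List ℕ} {a : ℕ} (h : a ∈ l) : a ≤ l.foldr max 0 := by
  induction l with
  | nil => simp at h
  | cons b l ih =>
    rcases List.mem_cons.1 h with rfl | h
    · exact le_max_left _ _
    · exact le_trans (ih h) (le_max_right _ _)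

lemma path_main {S : Finset Rule} {t : PT} :
    ∀ (p : List (ℕ × Option ℕ)) (L : List ℕ) (E : Finset (ℕ × Option ℕ)) (t₀ : PT) (tend : ℕ),
    L ∈ t.positions → t.sub L = some t₀ → Good S E t₀ →
    (toGraph t).chainFrom (t.idx L) p tend → (toGraph t).IsTerminal tend →
    (p.length ≤ t₀.depth ∧
     (ConsistentE (E ∪ (toGraph t).pathEqs p) →
       (∀ r ∈ (toGraph t).termSet tend, liftK r.K ⊆ E ∪ (toGraph t).pathEqs p) ∧
       (∀ r ∈ S, r ∉ (toGraph t).termSet tend →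
         ¬ ConsistentE (liftK r.K ∪ (E ∪ (toGraph t).pathEqs p))))) := by
  intro p
  induction p with
  | nil =>
    intro L E t₀ tend hL hsub hg hchain hterm
    have hend : t.idx L = tend := hchain
    subst hend
    cases hg with
    | @leaf E Z hZS hprop =>
      have hlab : (toGraph t).label (t.idx L) = Sum.inr Z := by
        show labelAt t (t.posOf (t.idx L)) = _
        rw [t.posOf_idx hL, labelAt, hsub]
      have hts : (toGraph t).termSet (t.idx L) = Z := by
        rw [DGraph.termSet, hlab]
        rfl
      have hpe : (toGraph t).pathEqs [] = ∅ := by simp [DGraph.pathEqs]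
      rw [hts, hpe, Finset.union_empty]
      exact ⟨Nat.zero_le _, hprop⟩
    | @node E a vals c ha hnd hvs hc =>
      exfalso
      have hvals_ne : vals ≠ [] := by
        intro h
        obtain ⟨δ, hδ⟩ := VS_nonempty ha
        rw [← hvs, h] at hδ; simp at hδ
      obtain ⟨δ, hδ⟩ := List.exists_mem_of_ne_nil vals hvals_ne
      have hmem : L ++ [δ] ∈ t.positions := by
        rw [t.mem_positions_iff, PT.sub_append, hsub]
        simp [PT.sub, hδ]
      have he : (t.idx L, some δ, t.idx (L ++ [δ])) ∈ (toGraph t).edges :=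
        edge_mem.2 ⟨L, δ, hL, hmem, rfl, rfl, rfl⟩
      exact hterm _ he rfl
  | cons e p ih =>
    intro L E t₀ tend hL hsub hg hchain hterm
    obtain ⟨u, l⟩ := e
    obtain ⟨hu, w, hew, hchain'⟩ := hchain
    simp only at hu
    subst hu
    have hvlt : t.idx L < (toGraph t).n := t.idx_lt hL
    obtain ⟨δ, rfl, hmem, rfl⟩ := edge_src_pos hvlt hew
    rw [t.posOf_idx hL] at hmem hchain'
    cases hg with
    | @leaf E Z hZS hprop =>
      exfalso
      rw [t.mem_positions_iff, PT.sub_append, hsub] at hmem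
      simp [PT.sub] at hmem
    | @node E a vals c ha hnd hvs hc =>
      have hδ : δ ∈ vals := by
        by_contra hδ
        rw [t.mem_positions_iff, PT.sub_append, hsub] at hmem
        simp [PT.sub, hδ] at hmem
      have hsub' : t.sub (L ++ [δ]) = some (c δ) := by
        rw [PT.sub_append, hsub]; simp [PT.sub, hδ]
      have hIH := ih (L ++ [δ]) (insert (a, some δ) E) (c δ) tend hmem hsub' (hc δ hδ)
        hchain' hterm
      have hlab : (toGraph t).label (t.idx L) = Sum.inl a := by
        show labelAt t (t.posOf (t.idx L)) = _
        rw [t.posOf_idx hL, labelAt, hsub]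
      have hpe : (toGraph t).pathEqs ((t.idx L, some δ) :: p) =
          insert (a, some δ) ((toGraph t).pathEqs p) := by
        simp [DGraph.pathEqs, List.filterMap_cons, hlab]
      have hset : E ∪ (toGraph t).pathEqs ((t.idx L, some δ) :: p) =
          insert (a, some δ) E ∪ (toGraph t).pathEqs p := by
        rw [hpe, Finset.union_insert, Finset.insert_union]
      constructor
      · have : (c δ).depth ≤ (vals.map fun δ => (c δ).depth).foldr max 0 :=
          le_foldr_max (List.mem_map_of_mem (f := fun δ => (c δ).depth) hδ)
        calc ((t.idx L, some δ) :: p).length = p.length + 1 := by simp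
        _ ≤ (c δ).depth + 1 := by omega
        _ ≤ (PT.node a vals c).depth := by rw [PT.depth]; omega
      · rw [hset]
        exact hIH.2

lemma sub_nil (t : PT) : t.sub [] = some t := by
  cases t <;> rfl

lemma toGraph_solves {S : Finset Rule} {t : PT} (hg : Good S ∅ t) :
    (toGraph t).SolvesAR S := by
  intro p tend hcomp hcons
  have hmain := path_main p [] ∅ t tend t.nil_mem_positions (sub_nil t) hg hcomp.1 hcomp.2.1
  rw [Finset.empty_union] at hmain
  exact hmain.2 hcons

lemma toGraph_depth_le {S : Finset Rule} {t : PT} (hg : Good S ∅ t) :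
    (toGraph t).depth ≤ t.depth := by
  have hb : ∀ m ∈ {m | ∃ p tend, (toGraph t).IsCompletePath p tend ∧ p.length = m},
      m ≤ t.depth := by
    rintro m ⟨p, tend, hcomp, rfl⟩
    exact (path_main p [] ∅ t tend t.nil_mem_positions (sub_nil t) hg hcomp.1 hcomp.2.1).1
  rw [DGraph.depth]
  rcases Set.eq_empty_or_nonempty
      {m | ∃ p tend, (toGraph t).IsCompletePath p tend ∧ p.length = m} with h | h
  · rw [h, csSup_empty]; exact Nat.zero_le _
  · exact csSup_le h hb

lemma toGraph_treeSolves {S : Finset Rule} {t : PT} (hg : Good S ∅ t) :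
    TreeSolvesAR S (toGraph t) :=
  ⟨toGraph_isDG hg, toGraph_isTree t, toGraph_solves hg⟩


lemma consistentE_anti {E F : Finset (ℕ × Option ℕ)} (h : E ⊆ F) (hF : ConsistentE F) :
    ConsistentE E := fun p hp q hq => hF p (h hp) q (h hq)

lemma empty_mem_ESys (S : Finset Rule) : (∅ : Finset (ℕ × Option ℕ)) ∈ ESys S false := by
  constructor
  · intro p hp; simp at hp
  · intro p hp; simp at hp

lemma attrs_mono {T T' : Finset Rule} (h : T ⊆ T') : attrs T ⊆ attrs T' :=
  Finset.biUnion_subset_biUnion_of_subset_left _ h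

lemma rule_attrs_subset {T : Finset Rule} {r : Rule} (h : r ∈ T) : r.attrs ⊆ attrs T :=
  Finset.subset_biUnion_of_mem _ h

lemma restrict_K_subset (r : Rule) (α : Finset (ℕ × Option ℕ)) :
    (r.restrict α).K ⊆ r.K := Finset.filter_subset _ _

lemma restrict_attrs_subset (r : Rule) (α : Finset (ℕ × Option ℕ)) :
    (r.restrict α).attrs ⊆ r.attrs := Finset.image_subset_image (restrict_K_subset r α)

lemma attrs_restrict_subset (S : Finset Rule) (α : Finset (ℕ × Option ℕ)) :
    attrs (restrict S α) ⊆ attrs S := by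
  intro a ha
  rw [attrs, Finset.mem_biUnion] at ha
  obtain ⟨r', hr', ha⟩ := ha
  rw [restrict, Finset.mem_image] at hr'
  obtain ⟨r, hr, rfl⟩ := hr'
  have hrS : r ∈ S := (Finset.mem_filter.1 hr).1
  exact rule_attrs_subset hrS (restrict_attrs_subset r α ha)

lemma attrs_cover (T : Finset Rule) : IsNodeCover T (attrs T) := by
  refine ⟨Finset.Subset.refl _, ?_⟩
  intro r hr ⟨a, ha⟩
  exact ⟨a, Finset.mem_inter.2 ⟨ha, rule_attrs_subset hr ha⟩⟩

lemma beta_le_card_attrs (T : Finset Rule) : beta T ≤ (attrs T).card :=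
  Nat.sInf_le ⟨attrs T, attrs_cover T, rfl⟩

lemma exists_min_cover (T : Finset Rule) : ∃ B, IsNodeCover T B ∧ B.card = beta T :=
  Nat.sInf_mem (⟨(attrs T).card, attrs T, attrs_cover T, rfl⟩ :
    Set.Nonempty {c | ∃ B, IsNodeCover T B ∧ B.card = c})

lemma Splus_subset (T : Finset Rule) : Splus T ⊆ T := Finset.filter_subset _ _

lemma betaPlus_le_nPar (S : Finset Rule) (α : Finset (ℕ × Option ℕ)) :
    betaPlus (restrict S α) ≤ nPar S := by
  refine le_trans (beta_le_card_attrs _) (Finset.card_le_card ?_)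
  exact (attrs_mono (Splus_subset _)).trans (attrs_restrict_subset S α)

lemma betaPlus_le_beta_ARplus {S : Finset Rule} {α : Finset (ℕ × Option ℕ)}
    (hα : α ∈ ESys S false) : betaPlus (restrict S α) ≤ beta_ARplus S := by
  refine le_csSup ⟨nPar S, ?_⟩ ⟨α, hα, rfl⟩
  rintro b ⟨α', hα', rfl⟩
  exact betaPlus_le_nPar S α'

lemma not_mem_of_mem_attrs_restrict {S : Finset Rule} {α : Finset (ℕ × Option ℕ)} {b : ℕ}
    (hb : b ∈ attrs (restrict S α)) : ∀ x, (b, x) ∉ α := by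
  intro x hx
  rw [attrs, Finset.mem_biUnion] at hb
  obtain ⟨r', hr', hb⟩ := hb
  rw [restrict, Finset.mem_image] at hr'
  obtain ⟨r, hr, rfl⟩ := hr'
  obtain ⟨hrS, hcons⟩ := Finset.mem_filter.1 hr
  rw [Rule.attrs, Finset.mem_image] at hb
  obtain ⟨⟨b', δ⟩, hmem, hfst⟩ := hb
  simp only at hfst
  subst hfst
  obtain ⟨hK, hnα⟩ := Finset.mem_filter.1 hmem
  have h1 : (b', some δ) ∈ liftK r.K ∪ α :=
    Finset.mem_union_left _ (Finset.mem_image_of_mem _ hK)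
  have h2 : (b', x) ∈ liftK r.K ∪ α := Finset.mem_union_right _ hx
  have := hcons _ h1 _ h2 rfl
  simp only at this
  subst this
  exact hnα hx

lemma insert_mem_ESys {S : Finset Rule} {α : Finset (ℕ × Option ℕ)} {b δ : ℕ}
    (hα : α ∈ ESys S false) (hb : b ∈ attrs S) (hδ : δ ∈ VS S b)
    (hdom : ∀ x, (b, x) ∉ α) : insert (b, some δ) α ∈ ESys S false := by
  obtain ⟨hc, hmem⟩ := hα
  constructor
  · intro p hp q hq hpq
    rcases Finset.mem_insert.1 hp with rfl | hp <;> rcases Finset.mem_insert.1 hq with rfl | hq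
    · rfl
    · have hq' : q = (b, q.2) := by
        obtain ⟨q1, q2⟩ := q
        simp only at hpq ⊢
        simp [← hpq]
      rw [hq'] at hq
      exact absurd hq (hdom q.2)
    · have hp' : p = (b, p.2) := by
        obtain ⟨p1, p2⟩ := p
        simp only at hpq ⊢
        simp [hpq]
      rw [hp'] at hp
      exact absurd hp (hdom p.2)
    · exact hc p hp q hq hpq
  · intro p hp
    rcases Finset.mem_insert.1 hp with rfl | hp
    · exact ⟨hb, mem_allowed_false.2 ⟨δ, hδ, rfl⟩⟩
    · exact hmem p hp

lemma mem_restrict_len_le {S : Finset Rule} {α : Finset (ℕ × Option ℕ)} {r : Rule}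
    (hr : r ∈ S) (hcons : ConsistentE (liftK r.K ∪ α)) :
    (r.restrict α).len ≤ dPar (restrict S α) :=
  Finset.le_sup (Finset.mem_image_of_mem _ (Finset.mem_filter.2 ⟨hr, hcons⟩))

lemma leaf_good {S : Finset Rule} {α : Finset (ℕ × Option ℕ)}
    (h0 : dPar (restrict S α) = 0) :
    Good S α (PT.leaf (S.filter fun r => ConsistentE (liftK r.K ∪ α))) := by
  refine Good.leaf (Finset.filter_subset _ _) ?_
  intro _
  constructor
  · intro r hrZ
    obtain ⟨hrS, hcons⟩ := Finset.mem_filter.1 hrZ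
    have hlen : (r.restrict α).len = 0 :=
      Nat.le_zero.1 (h0 ▸ mem_restrict_len_le hrS hcons)
    have hempty : (r.restrict α).K = ∅ := Finset.card_eq_zero.1 hlen
    intro p hp
    rw [liftK, Finset.mem_image] at hp
    obtain ⟨⟨b, δ⟩, hbδ, rfl⟩ := hp
    by_contra hnα
    have : (b, δ) ∈ (r.restrict α).K :=
      Finset.mem_filter.2 ⟨hbδ, hnα⟩
    rw [hempty] at this
    simp at this
  · intro r hrS hrZ hcons
    exact hrZ (Finset.mem_filter.2 ⟨hrS, hcons⟩)

lemma foldr_max_le {l : List ℕ} {D : ℕ} (h : ∀ a ∈ l, a ≤ D) : l.foldr max 0 ≤ D := by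
  induction l with
  | nil => simp
  | cons b l ih =>
    simp only [List.foldr]
    exact max_le (h b (by simp)) (ih fun a ha => h a (List.mem_cons_of_mem _ ha))


lemma phase_lemma {S : Finset Rule} {d' k' β : ℕ}
    (main : ∀ α' ∈ ESys S false, dPar (restrict S α') ≤ k' →
       ∃ τ, Good S α' τ ∧ τ.depth ≤ k' * β)
    (hd'1 : 1 ≤ d') (hd'2 : d' ≤ k' + 1) :
    ∀ (bs : List ℕ) (α : Finset (ℕ × Option ℕ)), α ∈ ESys S false → bs.Nodup →
      (∀ b ∈ bs, b ∈ attrs S ∧ ∀ x, (b, x) ∉ α) →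
      (∀ r ∈ S, ConsistentE (liftK r.K ∪ α) → (r.restrict α).len ≤ d' ∧
        ((r.restrict α).len = d' → ∃ b ∈ bs, b ∈ (r.restrict α).attrs)) →
      ∃ τ, Good S α τ ∧ τ.depth ≤ bs.length + k' * β := by
  intro bs
  induction bs with
  | nil =>
    intro α hα _ _ hrule
    have hd : dPar (restrict S α) ≤ k' := by
      refine Finset.sup_le ?_
      intro r' hr'
      rw [restrict, Finset.mem_image] at hr'
      obtain ⟨r, hr, rfl⟩ := hr'
      obtain ⟨hrS, hcons⟩ := Finset.mem_filter.1 hr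
      obtain ⟨hle, heq⟩ := hrule r hrS hcons
      rcases Nat.lt_or_ge (r.restrict α).len d' with h | h
      · omega
      · obtain ⟨b, hb, -⟩ := heq (le_antisymm hle h)
        simp at hb
    obtain ⟨τ, h1, h2⟩ := main α hα hd
    exact ⟨τ, h1, by simpa using h2⟩
  | cons b bs ih =>
    intro α hα hnd hattrs hrule
    obtain ⟨hbS, hbdom⟩ := hattrs b (by simp)
    have hVne : (VS S b).Nonempty := VS_nonempty hbS
    have hrec : ∀ δ ∈ VS S b,
        ∃ τ, Good S (insert (b, some δ) α) τ ∧ τ.depth ≤ bs.length + k' * β := by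
      intro δ hδ
      have hα' : insert (b, some δ) α ∈ ESys S false := insert_mem_ESys hα hbS hδ hbdom
      refine ih _ hα' (List.nodup_cons.1 hnd).2 ?_ ?_
      · intro b' hb'
        obtain ⟨hb'S, hb'dom⟩ := hattrs b' (List.mem_cons_of_mem _ hb')
        refine ⟨hb'S, ?_⟩
        intro x hx
        rcases Finset.mem_insert.1 hx with heq | hx
        · have : b' = b := congrArg Prod.fst heq
          exact (List.nodup_cons.1 hnd).1 (this ▸ hb')
        · exact hb'dom x hx
      · intro r hrS hcons'
        have hsubα : α ⊆ insert (b, some δ) α := Finset.subset_insert _ _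
        have hcons : ConsistentE (liftK r.K ∪ α) :=
          consistentE_anti (Finset.union_subset_union_right hsubα) hcons'
        have hKsub : (r.restrict (insert (b, some δ) α)).K ⊆ (r.restrict α).K := by
          intro p hp
          obtain ⟨hpK, hpn⟩ := Finset.mem_filter.1 hp
          exact Finset.mem_filter.2 ⟨hpK, fun h => hpn (hsubα h)⟩
        have hlen_le : (r.restrict (insert (b, some δ) α)).len ≤ (r.restrict α).len :=
          Finset.card_le_card hKsub
        obtain ⟨hle, heq⟩ := hrule r hrS hcons
        refine ⟨le_trans hlen_le hle, ?_⟩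
        intro hlen'
        have hKeq : (r.restrict (insert (b, some δ) α)).K = (r.restrict α).K := by
          refine Finset.eq_of_subset_of_card_le hKsub ?_
          have h1 : (r.restrict (insert (b, some δ) α)).K.card = d' := hlen'
          have h2 : (r.restrict α).K.card ≤ d' := hle
          omega
        have hlenα : (r.restrict α).len = d' := by
          have h3 : (r.restrict α).len = (r.restrict (insert (b, some δ) α)).len := by
            rw [Rule.len, Rule.len, hKeq]
          rw [h3, hlen']
        obtain ⟨b₀, hb₀, hb₀a⟩ := heq hlenα
        rcases List.mem_cons.1 hb₀ with heq | hb₀bs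
        · exfalso
          subst heq
          rw [Rule.attrs, Finset.mem_image] at hb₀a
          obtain ⟨⟨b₁, δᵣ⟩, hmem, hfst⟩ := hb₀a
          simp only at hfst
          rw [← hKeq] at hmem
          obtain ⟨hK, hnα⟩ := Finset.mem_filter.1 hmem
          have h1 : (b₁, some δᵣ) ∈ liftK r.K ∪ insert (b₀, some δ) α :=
            Finset.mem_union_left _ (Finset.mem_image_of_mem _ hK)
          have h2 : (b₀, some δ) ∈ liftK r.K ∪ insert (b₀, some δ) α :=
            Finset.mem_union_right _ (Finset.mem_insert_self _ _)
          have hsd := hcons' _ h1 _ h2 hfst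
          simp only [Option.some_inj] at hsd
          refine hnα ?_
          rw [hfst, hsd]
          exact Finset.mem_insert_self _ _
        · refine ⟨b₀, hb₀bs, ?_⟩
          rw [Rule.attrs] at hb₀a ⊢
          rw [← hKeq] at hb₀a
          exact hb₀a
    let c : ℕ → PT := fun δ => if h : δ ∈ VS S b then (hrec δ h).choose else PT.leaf ∅
    refine ⟨PT.node b (VS S b).toList c, ?_, ?_⟩
    · refine Good.node hbS (Finset.nodup_toList _) (by simp) ?_
      intro δ hδ
      have hδ' : δ ∈ VS S b := Finset.mem_toList.1 hδ
      show Good S (insert (b, some δ) α) (if h : δ ∈ VS S b then (hrec δ h).choose else PT.leaf ∅)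
      rw [dif_pos hδ']
      exact (hrec δ hδ').choose_spec.1
    · rw [PT.depth]
      have : ((VS S b).toList.map fun δ => (c δ).depth).foldr max 0 ≤ bs.length + k' * β := by
        refine foldr_max_le ?_
        intro m hm
        rw [List.mem_map] at hm
        obtain ⟨δ, hδ, rfl⟩ := hm
        have hδ' : δ ∈ VS S b := Finset.mem_toList.1 hδ
        show (if h : δ ∈ VS S b then (hrec δ h).choose else PT.leaf ∅).depth ≤ _
        rw [dif_pos hδ']
        exact (hrec δ hδ').choose_spec.2
      simp only [List.length_cons]
      omega

lemma build_main {S : Finset Rule} {β : ℕ}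
    (hβ : ∀ α ∈ ESys S false, betaPlus (restrict S α) ≤ β) :
    ∀ k (α : Finset (ℕ × Option ℕ)), α ∈ ESys S false → dPar (restrict S α) ≤ k →
      ∃ τ, Good S α τ ∧ τ.depth ≤ k * β := by
  intro k
  induction k with
  | zero =>
    intro α hα hd
    exact ⟨_, leaf_good (Nat.le_zero.1 hd), by simp [PT.depth]⟩
  | succ k' ih =>
    intro α hα hd
    by_cases h0 : dPar (restrict S α) = 0
    · exact ⟨_, leaf_good h0, by simp [PT.depth]⟩
    · obtain ⟨B, hBcov, hBcard⟩ := exists_min_cover (Splus (restrict S α))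
      have hBsub : B ⊆ attrs (restrict S α) :=
        hBcov.1.trans (attrs_mono (Splus_subset _))
      have hside1 : ∀ b ∈ B.toList, b ∈ attrs S ∧ ∀ x, (b, x) ∉ α := by
        intro b hb
        have hb' : b ∈ B := Finset.mem_toList.1 hb
        exact ⟨attrs_restrict_subset S α (hBsub hb'),
          not_mem_of_mem_attrs_restrict (hBsub hb')⟩
      have hside2 : ∀ r ∈ S, ConsistentE (liftK r.K ∪ α) →
          (r.restrict α).len ≤ dPar (restrict S α) ∧
          ((r.restrict α).len = dPar (restrict S α) →
            ∃ b ∈ B.toList, b ∈ (r.restrict α).attrs) := by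
        intro r hrS hcons
        refine ⟨mem_restrict_len_le hrS hcons, ?_⟩
        intro hlen
        have hmemplus : r.restrict α ∈ Splus (restrict S α) :=
          Finset.mem_filter.2 ⟨Finset.mem_image_of_mem _ (Finset.mem_filter.2 ⟨hrS, hcons⟩), hlen⟩
        have hne : (r.restrict α).attrs.Nonempty := by
          have hK : (r.restrict α).K.Nonempty := by
            rw [← Finset.card_pos, ← Rule.len, hlen]
            omega
          exact hK.image _
        obtain ⟨b, hb⟩ := hBcov.2 _ hmemplus hne
        obtain ⟨hb1, hb2⟩ := Finset.mem_inter.1 hb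
        exact ⟨b, Finset.mem_toList.2 hb2, hb1⟩
      obtain ⟨τ, h1, h2⟩ := phase_lemma ih (Nat.one_le_iff_ne_zero.2 h0) hd B.toList α hα
        (Finset.nodup_toList _) hside1 hside2
      refine ⟨τ, h1, ?_⟩
      have hcard : B.toList.length ≤ β := by
        rw [Finset.length_toList, hBcard]
        exact hβ α hα
      calc τ.depth ≤ B.toList.length + k' * β := h2
      _ ≤ β + k' * β := by omega
      _ = (k' + 1) * β := by ring


lemma liftK_consistent {r : Rule} (hwf : r.WF) : ConsistentE (liftK r.K) := by
  intro p hp q hq hpq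
  rw [liftK, Finset.mem_image] at hp hq
  obtain ⟨⟨a, δ⟩, ha, rfl⟩ := hp
  obtain ⟨⟨a', δ'⟩, ha', rfl⟩ := hq
  simp only at hpq ⊢
  have := hwf _ ha _ ha' hpq
  rw [Prod.ext_iff] at this
  exact congrArg some this.2

lemma exists_adv_path {S : Finset Rule} {G : DGraph} (hDG : G.IsDG S false)
    (f : ℕ → ℕ) (hf : ∀ a ∈ attrs S, f a ∈ VS S a) :
    ∃ p tend, G.IsCompletePath p tend ∧
      ∀ e ∈ p, ∃ a, G.label e.1 = Sum.inl a ∧ a ∈ attrs S ∧ e.2 = some (f a) := by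
  obtain ⟨hroot, hedge, hacyc, hnodes⟩ := hDG
  classical
  let reach : ℕ → Finset ℕ :=
    fun v => (Finset.range G.n).filter fun u => Relation.ReflTransGen G.step v u
  have key : ∀ n v, (reach v).card ≤ n → v < G.n →
      ∃ p tend, G.chainFrom v p tend ∧ G.IsTerminal tend ∧ tend < G.n ∧
        (∀ e ∈ p, ∃ a, G.label e.1 = Sum.inl a ∧ a ∈ attrs S ∧ e.2 = some (f a)) := by
    intro n
    induction n with
    | zero =>
      intro v hc hv
      exfalso
      have hvmem : v ∈ reach v :=
        Finset.mem_filter.2 ⟨Finset.mem_range.2 hv, Relation.ReflTransGen.refl⟩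
      have := Finset.card_pos.2 ⟨v, hvmem⟩
      omega
    | succ n ih =>
      intro v hc hv
      by_cases hterm : G.IsTerminal v
      · exact ⟨[], v, rfl, hterm, hv, by simp⟩
      · have := hnodes v hv
        rw [if_neg hterm] at this
        obtain ⟨a, hlab, haS, hiff, huniq⟩ := this
        have hmem : some (f a) ∈ allowed S false a :=
          mem_allowed_false.2 ⟨f a, hf a haS, rfl⟩
        obtain ⟨w, hw⟩ := (hiff (some (f a))).2 hmem
        have hwn : w < G.n := (hedge _ hw).2
        have hstep : G.step v w := ⟨_, hw⟩
        have hsub : reach w ⊆ reach v := by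
          intro u hu
          obtain ⟨h1, h2⟩ := Finset.mem_filter.1 hu
          exact Finset.mem_filter.2 ⟨h1, Relation.ReflTransGen.head hstep h2⟩
        have hvnot : v ∉ reach w := by
          intro hvw
          obtain ⟨-, h2⟩ := Finset.mem_filter.1 hvw
          exact hacyc v (Relation.TransGen.head' hstep h2)
        have hvmem : v ∈ reach v :=
          Finset.mem_filter.2 ⟨Finset.mem_range.2 hv, Relation.ReflTransGen.refl⟩
        have hlt : (reach w).card < (reach v).card :=
          Finset.card_lt_card ⟨hsub, fun h => hvnot (h hvmem)⟩
        obtain ⟨p, tend, h1, h2, h3, h4⟩ := ih w (by omega) hwn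
        refine ⟨(v, some (f a)) :: p, tend, ⟨rfl, w, hw, h1⟩, h2, h3, ?_⟩
        rintro e he
        rcases List.mem_cons.1 he with rfl | he
        · exact ⟨a, hlab, haS, rfl⟩
        · exact h4 e he
  obtain ⟨p, tend, h1, h2, h3, h4⟩ := key (reach G.root).card G.root le_rfl hroot
  exact ⟨p, tend, ⟨h1, h2, h3⟩, h4⟩

lemma pathEqs_form {S : Finset Rule} {G : DGraph} {p : List (ℕ × Option ℕ)} {f : ℕ → ℕ}
    (hp : ∀ e ∈ p, ∃ a, G.label e.1 = Sum.inl a ∧ a ∈ attrs S ∧ e.2 = some (f a)) :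
    ∀ q ∈ G.pathEqs p, ∃ a, a ∈ attrs S ∧ q = (a, some (f a)) := by
  intro q hq
  rw [DGraph.pathEqs, List.mem_toFinset, List.mem_filterMap] at hq
  obtain ⟨e, he, heq⟩ := hq
  obtain ⟨a, hlab, haS, he2⟩ := hp e he
  rw [hlab] at heq
  simp only [Sum.elim_inl, Option.some_inj] at heq
  exact ⟨a, haS, by rw [← heq, he2]⟩

lemma consistent_of_form {E : Finset (ℕ × Option ℕ)} {f : ℕ → ℕ}
    (h : ∀ q ∈ E, ∃ a, q = (a, some (f a))) : ConsistentE E := by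
  intro p hp q hq hpq
  obtain ⟨a, rfl⟩ := h p hp
  obtain ⟨a', rfl⟩ := h q hq
  simp only at hpq ⊢
  rw [hpq]

lemma chain_trans {G : DGraph} :
    ∀ (p : List (ℕ × Option ℕ)) (v tend : ℕ), G.chainFrom v p tend →
      ∀ e ∈ p, e.1 = v ∨ Relation.TransGen G.step v e.1 := by
  intro p
  induction p with
  | nil => intro v tend h e he; simp at he
  | cons e₀ p ih =>
    intro v tend h e he
    obtain ⟨h1, w, hw, hchain⟩ := h
    rcases List.mem_cons.1 he with rfl | he
    · exact Or.inl h1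
    · rcases ih w tend hchain e he with h2 | h2
      · exact Or.inr (h2 ▸ Relation.TransGen.single ⟨_, hw⟩)
      · exact Or.inr (Relation.TransGen.head ⟨_, hw⟩ h2)

lemma chain_nodup {G : DGraph} (hacyc : G.Acyclic) :
    ∀ (p : List (ℕ × Option ℕ)) (v tend : ℕ), G.chainFrom v p tend →
      (p.map Prod.fst).Nodup := by
  intro p
  induction p with
  | nil => intro v tend h; simp
  | cons e₀ p ih =>
    intro v tend h
    obtain ⟨h1, w, hw, hchain⟩ := h
    simp only [List.map_cons, List.nodup_cons]
    refine ⟨?_, ih w tend hchain⟩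
    intro hmem
    rw [List.mem_map] at hmem
    obtain ⟨e, he, hfst⟩ := hmem
    have hstep : G.step v w := ⟨_, hw⟩
    rcases chain_trans p w tend hchain e he with h2 | h2
    · refine hacyc v (Relation.TransGen.single ?_)
      have hwv : w = v := by rw [← h2, hfst, h1]
      exact hwv ▸ hstep
    · refine hacyc v (Relation.TransGen.head hstep ?_)
      rwa [hfst, h1] at h2

lemma chain_fst_lt {S : Finset Rule} {G : DGraph} (hDG : G.IsDG S false) :
    ∀ (p : List (ℕ × Option ℕ)) (v tend : ℕ), G.chainFrom v p tend →
      ∀ e ∈ p, e.1 < G.n := by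
  intro p
  induction p with
  | nil => intro v tend h e he; simp at he
  | cons e₀ p ih =>
    intro v tend h e he
    obtain ⟨h1, w, hw, hchain⟩ := h
    rcases List.mem_cons.1 he with rfl | he
    · exact h1 ▸ (hDG.2.1 _ hw).1
    · exact ih w tend hchain e he

lemma complete_path_length_le {S : Finset Rule} {G : DGraph} (hDG : G.IsDG S false)
    {p : List (ℕ × Option ℕ)} {tend : ℕ} (hcomp : G.IsCompletePath p tend) :
    p.length ≤ G.n := by
  classical
  have hnd : (p.map Prod.fst).Nodup := chain_nodup hDG.2.2.1 p G.root tend hcomp.1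
  have hlt : ∀ x ∈ p.map Prod.fst, x < G.n := by
    intro x hx
    rw [List.mem_map] at hx
    obtain ⟨e, he, rfl⟩ := hx
    exact chain_fst_lt hDG p G.root tend hcomp.1 e he
  have hsub : (p.map Prod.fst).toFinset ⊆ Finset.range G.n := by
    intro x hx
    exact Finset.mem_range.2 (hlt x (List.mem_toFinset.1 hx))
  calc p.length = (p.map Prod.fst).length := by simp
  _ = (p.map Prod.fst).toFinset.card := (List.toFinset_card_of_nodup hnd).symm
  _ ≤ (Finset.range G.n).card := Finset.card_le_card hsub
  _ = G.n := Finset.card_range _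

lemma length_le_depth {S : Finset Rule} {G : DGraph} (hDG : G.IsDG S false)
    {p : List (ℕ × Option ℕ)} {tend : ℕ} (hcomp : G.IsCompletePath p tend) :
    p.length ≤ G.depth := by
  refine le_csSup ⟨G.n, ?_⟩ ⟨p, tend, hcomp, rfl⟩
  rintro m ⟨p', tend', hcomp', rfl⟩
  exact complete_path_length_le hDG hcomp'

lemma pathEqs_card_le {G : DGraph} (p : List (ℕ × Option ℕ)) :
    (G.pathEqs p).card ≤ p.length := by
  calc (G.pathEqs p).card ≤ (p.filterMap _).length := List.toFinset_card_le _
  _ ≤ p.length := List.length_filterMap_le _ _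


lemma liftK_card {r : Rule} : (liftK r.K).card = r.len := by
  rw [liftK, Rule.len]
  refine Finset.card_image_of_injective _ ?_
  rintro ⟨a, δ⟩ ⟨a', δ'⟩ h
  simp only [Prod.mk.injEq, Option.some_inj] at h
  simp [h.1, h.2]

lemma dPar_le_depth {S : Finset Rule} {G : DGraph} (hS : S.Nonempty)
    (hwf : ∀ r ∈ S, r.WF) (hDG : G.IsDG S false) (hSolve : G.SolvesAR S) :
    dPar S ≤ G.depth := by
  classical
  obtain ⟨r, hr, hsup⟩ := Finset.exists_mem_eq_sup S hS Rule.len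
  set f : ℕ → ℕ := fun a =>
    if h : ∃ δ, (a, δ) ∈ r.K then h.choose
    else if h2 : (VS S a).Nonempty then h2.choose else 0 with hfdef
  have hfK : ∀ {b δ : ℕ}, (b, δ) ∈ r.K → f b = δ := by
    intro b δ hbδ
    have h : ∃ δ', (b, δ') ∈ r.K := ⟨δ, hbδ⟩
    have hch : (b, h.choose) ∈ r.K := h.choose_spec
    have := hwf r hr _ hbδ _ hch rfl
    rw [Prod.ext_iff] at this
    simp only [hfdef, dif_pos h]
    exact this.2.symm
  have hf : ∀ a ∈ attrs S, f a ∈ VS S a := by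
    intro a ha
    by_cases h : ∃ δ, (a, δ) ∈ r.K
    · have hch : (a, h.choose) ∈ r.K := h.choose_spec
      have : f a = h.choose := by simp only [hfdef, dif_pos h]
      rw [this]
      exact mem_VS_of hr hch
    · have h2 : (VS S a).Nonempty := VS_nonempty ha
      have : f a = h2.choose := by simp only [hfdef, dif_neg h, dif_pos h2]
      rw [this]
      exact h2.choose_spec
  obtain ⟨p, tend, hcomp, hform⟩ := exists_adv_path hDG f hf
  have hliftform : ∀ q ∈ liftK r.K, ∃ a, q = (a, some (f a)) := by
    intro q hq
    rw [liftK, Finset.mem_image] at hq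
    obtain ⟨⟨b, δ⟩, hbδ, rfl⟩ := hq
    exact ⟨b, by rw [hfK hbδ]⟩
  have hpform : ∀ q ∈ G.pathEqs p, ∃ a, q = (a, some (f a)) := by
    intro q hq
    obtain ⟨a, -, rfl⟩ := pathEqs_form hform q hq
    exact ⟨a, rfl⟩
  have hconsP : ConsistentE (G.pathEqs p) := consistent_of_form hpform
  have hconsU : ConsistentE (liftK r.K ∪ G.pathEqs p) := by
    refine consistent_of_form (f := f) ?_
    intro q hq
    rcases Finset.mem_union.1 hq with hq | hq
    · exact hliftform q hq
    · exact hpform q hq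
  obtain ⟨hcond1, hcond2⟩ := hSolve p tend hcomp hconsP
  have hrmem : r ∈ G.termSet tend := by
    by_contra hnot
    exact hcond2 r hr hnot hconsU
  have hsubset : liftK r.K ⊆ G.pathEqs p := hcond1 r hrmem
  calc dPar S = r.len := hsup
  _ = (liftK r.K).card := liftK_card.symm
  _ ≤ (G.pathEqs p).card := Finset.card_le_card hsubset
  _ ≤ p.length := pathEqs_card_le p
  _ ≤ G.depth := length_le_depth hDG hcomp

lemma beta_restrict_le_depth {S : Finset Rule} {G : DGraph}
    (hwf : ∀ r ∈ S, r.WF) (hDG : G.IsDG S false) (hSolve : G.SolvesAR S)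
    {α : Finset (ℕ × Option ℕ)} (hα : α ∈ ESys S false) :
    beta (restrict S α) ≤ G.depth := by
  classical
  obtain ⟨hαc, hαmem⟩ := hα
  set f : ℕ → ℕ := fun a =>
    if h : ∃ δ, (a, some δ) ∈ α then h.choose
    else if h2 : (VS S a).Nonempty then h2.choose else 0 with hfdef
  have hfα : ∀ {b : ℕ} {x : ℕ}, (b, some x) ∈ α → f b = x := by
    intro b x hbx
    have h : ∃ δ, (b, some δ) ∈ α := ⟨x, hbx⟩
    have hch : (b, some h.choose) ∈ α := h.choose_spec
    have := hαc _ hbx _ hch rfl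
    simp only [Option.some_inj] at this
    simp only [hfdef, dif_pos h]
    exact this.symm
  have hf : ∀ a ∈ attrs S, f a ∈ VS S a := by
    intro a ha
    by_cases h : ∃ δ, (a, some δ) ∈ α
    · have hch : (a, some h.choose) ∈ α := h.choose_spec
      have hmem := (hαmem _ hch).2
      rw [mem_allowed_false] at hmem
      obtain ⟨δ, hδ, hδeq⟩ := hmem
      simp only [Option.some_inj] at hδeq
      have : f a = h.choose := by simp only [hfdef, dif_pos h]
      rw [this, hδeq]
      exact hδ
    · have h2 : (VS S a).Nonempty := VS_nonempty ha
      have : f a = h2.choose := by simp only [hfdef, dif_neg h, dif_pos h2]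
      rw [this]
      exact h2.choose_spec
  obtain ⟨p, tend, hcomp, hform⟩ := exists_adv_path hDG f hf
  have hpform : ∀ q ∈ G.pathEqs p, ∃ a, q = (a, some (f a)) := by
    intro q hq
    obtain ⟨a, -, rfl⟩ := pathEqs_form hform q hq
    exact ⟨a, rfl⟩
  have hconsP : ConsistentE (G.pathEqs p) := consistent_of_form hpform
  obtain ⟨hcond1, hcond2⟩ := hSolve p tend hcomp hconsP
  set B : Finset ℕ := ((G.pathEqs p).image Prod.fst) ∩ attrs (restrict S α) with hBdef
  have hcover : IsNodeCover (restrict S α) B := by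
    refine ⟨Finset.inter_subset_right, ?_⟩
    intro r' hr' hne
    rw [restrict, Finset.mem_image] at hr'
    obtain ⟨r, hrmem, rfl⟩ := hr'
    obtain ⟨hrS, hconsα⟩ := Finset.mem_filter.1 hrmem
    have hr'mem : r.restrict α ∈ restrict S α := Finset.mem_image_of_mem _ hrmem
    by_cases hC : ConsistentE (liftK r.K ∪ G.pathEqs p)
    · have hrterm : r ∈ G.termSet tend := by
        by_contra hnot
        exact hcond2 r hrS hnot hC
      have hsubset : liftK r.K ⊆ G.pathEqs p := hcond1 r hrterm
      obtain ⟨b, hb⟩ := hne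
      rw [Rule.attrs, Finset.mem_image] at hb
      obtain ⟨⟨b', δ⟩, hmem, hfst⟩ := hb
      obtain ⟨hK, hnα⟩ := Finset.mem_filter.1 hmem
      have hlift : (b', some δ) ∈ G.pathEqs p :=
        hsubset (Finset.mem_image_of_mem _ hK)
      refine ⟨b, Finset.mem_inter.2 ⟨?_, Finset.mem_inter.2 ⟨?_, ?_⟩⟩⟩
      · rw [Rule.attrs, Finset.mem_image]
        exact ⟨(b', δ), hmem, hfst⟩
      · rw [← hfst]
        exact Finset.mem_image_of_mem _ hlift
      · refine rule_attrs_subset hr'mem ?_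
        rw [Rule.attrs, Finset.mem_image]
        exact ⟨(b', δ), hmem, hfst⟩
    · rw [ConsistentE] at hC
      push_neg at hC
      obtain ⟨q1, hq1, q2, hq2, hfst, hsnd⟩ := hC
      have hliftcons : ConsistentE (liftK r.K) := liftK_consistent (hwf r hrS)
      have hmix : ∃ b δ, (b, δ) ∈ r.K ∧ some δ ≠ some (f b) ∧ b ∈ (G.pathEqs p).image Prod.fst := by
        rcases Finset.mem_union.1 hq1 with h1 | h1 <;> rcases Finset.mem_union.1 hq2 with h2 | h2
        · exact absurd (hliftcons _ h1 _ h2 hfst) hsnd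
        · -- q1 ∈ liftK, q2 ∈ pathEqs
          rw [liftK, Finset.mem_image] at h1
          obtain ⟨⟨b, δ⟩, hbδ, rfl⟩ := h1
          obtain ⟨a, rfl⟩ := hpform q2 h2
          simp only at hfst
          subst hfst
          refine ⟨b, δ, hbδ, hsnd, ?_⟩
          exact Finset.mem_image_of_mem _ h2
        · -- q2 ∈ liftK, q1 ∈ pathEqs
          rw [liftK, Finset.mem_image] at h2
          obtain ⟨⟨b, δ⟩, hbδ, rfl⟩ := h2
          obtain ⟨a, rfl⟩ := hpform q1 h1
          simp only at hfst
          subst hfst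
          refine ⟨a, δ, hbδ, fun h => hsnd h.symm, ?_⟩
          exact Finset.mem_image_of_mem _ h1
        · exact absurd (hconsP _ h1 _ h2 hfst) hsnd
      obtain ⟨b, δ, hbδ, hneq, hbim⟩ := hmix
      have hnα : (b, some δ) ∉ α := by
        intro hin
        exact hneq (by rw [hfα hin])
      have hbattr : b ∈ (r.restrict α).attrs := by
        rw [Rule.attrs, Finset.mem_image]
        exact ⟨(b, δ), Finset.mem_filter.2 ⟨hbδ, hnα⟩, rfl⟩
      exact ⟨b, Finset.mem_inter.2 ⟨hbattr,
        Finset.mem_inter.2 ⟨hbim, rule_attrs_subset hr'mem hbattr⟩⟩⟩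
  calc beta (restrict S α) ≤ B.card := Nat.sInf_le ⟨B, hcover, rfl⟩
  _ ≤ ((G.pathEqs p).image Prod.fst).card := Finset.card_le_card Finset.inter_subset_left
  _ ≤ (G.pathEqs p).card := Finset.card_image_le
  _ ≤ p.length := pathEqs_card_le p
  _ ≤ G.depth := length_le_depth hDG hcomp

lemma beta_AR_le_depth {S : Finset Rule} {G : DGraph}
    (hwf : ∀ r ∈ S, r.WF) (hDG : G.IsDG S false) (hSolve : G.SolvesAR S) :
    beta_AR S ≤ G.depth := by
  rw [beta_AR, betaC]
  rcases Set.eq_empty_or_nonempty {b | ∃ α ∈ ESys S false, beta (restrict S α) = b} with h | h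
  · rw [h, csSup_empty]; exact Nat.zero_le _
  · refine csSup_le h ?_
    rintro b ⟨α, hα, rfl⟩
    exact beta_restrict_le_depth hwf hDG hSolve hα


/-- Theorem 4(a): max{d(S), β_AR(S)} ≤ h_AR(S) ≤ d(S)·β_AR⁺(S). -/
theorem statement_15 (S : Finset Rule) (hS : S.Nonempty) (hwf : ∀ r ∈ S, r.WF)
    (hn : 0 < nPar S) :
    max (dPar S) (beta_AR S) ≤ h_AR S ∧ h_AR S ≤ dPar S * beta_ARplus S := by
  have hβ : ∀ α ∈ ESys S false, betaPlus (restrict S α) ≤ beta_ARplus S :=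
    fun α hα => betaPlus_le_beta_ARplus hα
  have hd0 : dPar (restrict S ∅) ≤ dPar S := by
    refine Finset.sup_le ?_
    intro r' hr'
    rw [restrict, Finset.mem_image] at hr'
    obtain ⟨r, hr, rfl⟩ := hr'
    have h1 : (r.restrict ∅).len ≤ r.len := Finset.card_le_card (restrict_K_subset r ∅)
    exact h1.trans (Finset.le_sup (Finset.mem_filter.1 hr).1)
  obtain ⟨τ, hg, hdep⟩ := build_main hβ (dPar S) ∅ (empty_mem_ESys S) hd0
  have hmem : (toGraph τ).depth ∈ {m | ∃ G, TreeSolvesAR S G ∧ G.depth = m} :=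
    ⟨toGraph τ, toGraph_treeSolves hg, rfl⟩
  constructor
  · obtain ⟨G0, hG0, hdep0⟩ := Nat.sInf_mem (⟨_, hmem⟩ : Set.Nonempty _)
    rw [h_AR, ← hdep0]
    exact max_le (dPar_le_depth hS hwf hG0.1 hG0.2.2) (beta_AR_le_depth hwf hG0.1 hG0.2.2)
  · rw [h_AR]
    exact le_trans (Nat.sInf_le hmem) (le_trans (toGraph_depth_le hg) hdep)

end DRS
end
end

section
/- Let S be a decision rule system with n(S) > 0. Then h_AD(S) ≤ d(S)·β_AD⁺(S) and h_SR(S) ≤ d(S)·β_SR⁺(S). -/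
/- Common formal framework for decision rule systems and decision trees /
   acyclic decision graphs, following Durdymyradov & Moshkov. -/

attribute [local instance] Classical.propDecidable

noncomputable section

namespace DRS

namespace Aux

inductive T where
  | leaf : Finset Rule → T
  | node : ℕ → (ℕ → T) → T

def hists (S : Finset Rule) : T → Finset (List (ℕ × Option ℕ))
  | .leaf _ => {[]}
  | .node a f =>
      insert [] ((VS S a).biUnion fun δ => ((hists S (f δ)).image ((a, some δ) :: ·)))

def labelAt : T → List (ℕ × Option ℕ) → ℕ ⊕ Finset Rule
  | .leaf Z, _ => Sum.inr Z
  | .node a _, [] => Sum.inl a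
  | .node _ f, e :: rest =>
      match e.2 with
      | some δ => labelAt (f δ) rest
      | none => Sum.inr ∅

def dep (S : Finset Rule) : T → ℕ
  | .leaf _ => 0
  | .node a f => ((VS S a).sup fun δ => dep S (f δ)) + 1

def TWF (S : Finset Rule) : T → Prop
  | .leaf Z => Z ⊆ S
  | .node a f => a ∈ attrs S ∧ ∀ δ ∈ VS S a, TWF S (f δ)

lemma nil_mem_hists (S : Finset Rule) (t : T) : [] ∈ hists S t := by
  cases t <;> simp [hists]

lemma mem_hists_node {S : Finset Rule} {a f h} :
    h ∈ hists S (.node a f) ↔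
      h = [] ∨ ∃ δ ∈ VS S a, ∃ h₂ ∈ hists S (f δ), h = (a, some δ) :: h₂ := by
  constructor
  · intro hh
    rw [hists, Finset.mem_insert] at hh
    rcases hh with rfl | hh
    · exact Or.inl rfl
    · rw [Finset.mem_biUnion] at hh
      rcases hh with ⟨δ, hδ, hh⟩
      rw [Finset.mem_image] at hh
      rcases hh with ⟨h₂, hh₂, rfl⟩
      exact Or.inr ⟨δ, hδ, h₂, hh₂, rfl⟩
  · rintro (rfl | ⟨δ, hδ, h₂, hh₂, rfl⟩)
    · rw [hists]; exact Finset.mem_insert_self _ _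
    · rw [hists, Finset.mem_insert, Finset.mem_biUnion]
      exact Or.inr ⟨δ, hδ, Finset.mem_image_of_mem _ hh₂⟩

lemma mem_hists_leaf {S : Finset Rule} {Z h} : h ∈ hists S (.leaf Z) ↔ h = [] := by
  simp [hists]

lemma length_le_dep {S : Finset Rule} {t : T} {h} (hh : h ∈ hists S t) :
    h.length ≤ dep S t := by
  induction t generalizing h with
  | leaf Z => rw [mem_hists_leaf] at hh; simp [hh, dep]
  | node a f ih =>
      rw [mem_hists_node] at hh
      rcases hh with rfl | ⟨δ, hδ, h₂, hh₂, rfl⟩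
      · simp
      · simpa [dep, Nat.add_le_add_iff_right] using
          le_trans (ih δ hh₂) (Finset.le_sup (f := fun δ => dep S (f δ)) hδ)

lemma child_mem {S : Finset Rule} {t : T} {h : List (ℕ × Option ℕ)} {a δ} (hh : h ∈ hists S t)
    (hl : labelAt t h = .inl a) (hδ : δ ∈ VS S a) :
    h ++ [(a, some δ)] ∈ hists S t := by
  induction t generalizing h with
  | leaf Z => simp [labelAt] at hl
  | node b f ih =>
      rw [mem_hists_node] at hh
      rcases hh with rfl | ⟨δ', hδ', h₂, hh₂, rfl⟩
      · have hb : b = a := by simpa [labelAt] using hl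
        subst hb
        exact mem_hists_node.2 (Or.inr ⟨δ, hδ, [], nil_mem_hists S (f δ), rfl⟩)
      · have hl2 : labelAt (f δ') h₂ = .inl a := by simpa [labelAt] using hl
        exact mem_hists_node.2 (Or.inr ⟨δ', hδ', h₂ ++ [(a, some δ)], ih δ' hh₂ hl2, rfl⟩)

lemma parent_mem {S : Finset Rule} {t : T} {h : List (ℕ × Option ℕ)} {e}
    (hh : h ++ [e] ∈ hists S t) :
    h ∈ hists S t ∧ ∃ a δ, e = (a, some δ) ∧ labelAt t h = .inl a ∧ δ ∈ VS S a := by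
  induction t generalizing h with
  | leaf Z => simp [mem_hists_leaf] at hh
  | node b f ih =>
      rw [mem_hists_node] at hh
      rcases hh with hnil | ⟨δ', hδ', h₂, hh₂, heq⟩
      · simp at hnil
      · cases h with
        | nil =>
            simp at heq
            refine ⟨nil_mem_hists _ _, b, δ', ?_, rfl, hδ'⟩
            rw [heq.1]
        | cons x h₃ =>
            simp only [List.cons_append, List.cons.injEq] at heq
            obtain ⟨rfl, heq2⟩ := heq
            subst heq2
            obtain ⟨hmem, a, δ, rfl, hlab, hδ⟩ := ih δ' hh₂
            refine ⟨mem_hists_node.2 (Or.inr ⟨δ', hδ', h₃, hmem, rfl⟩), a, δ, rfl, ?_, hδ⟩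
            simpa [labelAt] using hlab

lemma wf_inl {S : Finset Rule} {t : T} {h : List (ℕ × Option ℕ)} {a} (hw : TWF S t)
    (hh : h ∈ hists S t) (hl : labelAt t h = .inl a) : a ∈ attrs S := by
  induction t generalizing h with
  | leaf Z => simp [labelAt] at hl
  | node b f ih =>
      rw [mem_hists_node] at hh
      rcases hh with rfl | ⟨δ', hδ', h₂, hh₂, rfl⟩
      · have hb : b = a := by simpa [labelAt] using hl
        exact hb ▸ hw.1
      · exact ih δ' (hw.2 δ' hδ') hh₂ (by simpa [labelAt] using hl)

lemma wf_inr {S : Finset Rule} {t : T} {h : List (ℕ × Option ℕ)} {Z} (hw : TWF S t)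
    (hh : h ∈ hists S t) (hl : labelAt t h = .inr Z) : Z ⊆ S := by
  induction t generalizing h with
  | leaf Z' =>
      have : Z' = Z := by simpa [labelAt] using hl
      exact this ▸ hw
  | node b f ih =>
      rw [mem_hists_node] at hh
      rcases hh with rfl | ⟨δ', hδ', h₂, hh₂, rfl⟩
      · simp [labelAt] at hl
      · exact ih δ' (hw.2 δ' hδ') hh₂ (by simpa [labelAt] using hl)

lemma VS_nonempty {S : Finset Rule} {a} (ha : a ∈ attrs S) : (VS S a).Nonempty := by
  rw [attrs, Finset.mem_biUnion] at ha
  obtain ⟨r, hr, ha⟩ := ha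
  rw [Rule.attrs, Finset.mem_image] at ha
  obtain ⟨p, hp, rfl⟩ := ha
  exact ⟨p.2, by
    rw [VS, Finset.mem_image]
    exact ⟨p, Finset.mem_filter.2 ⟨Finset.mem_biUnion.2 ⟨r, hr, hp⟩, rfl⟩, rfl⟩⟩

def idx (S : Finset Rule) (t : T) (h : List (ℕ × Option ℕ)) : ℕ :=
  if hh : h ∈ hists S t then ((hists S t).equivFin ⟨h, hh⟩ : Fin _).val else 0

def inv (S : Finset Rule) (t : T) (v : ℕ) : List (ℕ × Option ℕ) :=
  if hv : v < (hists S t).card then ((hists S t).equivFin.symm ⟨v, hv⟩ : { x // x ∈ hists S t }).val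
  else []

lemma idx_lt {S t h} (hh : h ∈ hists S t) : idx S t h < (hists S t).card := by
  rw [idx, dif_pos hh]; exact ((hists S t).equivFin ⟨h, hh⟩).isLt

lemma inv_idx {S t h} (hh : h ∈ hists S t) : inv S t (idx S t h) = h := by
  rw [inv, dif_pos (idx_lt hh)]
  have : (⟨idx S t h, idx_lt hh⟩ : Fin (hists S t).card) = (hists S t).equivFin ⟨h, hh⟩ := by
    apply Fin.ext; simp [idx, dif_pos hh]
  rw [this, Equiv.symm_apply_apply]

lemma inv_mem {S t v} (hv : v < (hists S t).card) : inv S t v ∈ hists S t := by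
  rw [inv, dif_pos hv]; exact ((hists S t).equivFin.symm ⟨v, hv⟩).2

lemma idx_inv {S t v} (hv : v < (hists S t).card) : idx S t (inv S t v) = v := by
  have hm := inv_mem (S := S) (t := t) hv
  rw [idx, dif_pos hm]
  have hval : inv S t v = ((hists S t).equivFin.symm ⟨v, hv⟩ : { x // x ∈ hists S t }).val := by
    rw [inv, dif_pos hv]
  have : (⟨inv S t v, hm⟩ : { x // x ∈ hists S t }) = (hists S t).equivFin.symm ⟨v, hv⟩ :=
    Subtype.ext hval
  rw [this, Equiv.apply_symm_apply]

lemma idx_inj {S t h h'} (hh : h ∈ hists S t) (hh' : h' ∈ hists S t)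
    (he : idx S t h = idx S t h') : h = h' := by
  have := inv_idx hh; rw [he, inv_idx hh'] at this; exact this.symm

def GOf (S : Finset Rule) (t : T) : DGraph where
  n := (hists S t).card
  root := idx S t []
  label := fun v => labelAt t (inv S t v)
  edges := (hists S t).biUnion fun h =>
    Sum.elim
      (fun a => (VS S a).image fun δ => (idx S t h, some δ, idx S t (h ++ [(a, some δ)])))
      (fun _ => ∅) (labelAt t h)

lemma mem_edges {S t e} :
    e ∈ (GOf S t).edges ↔ ∃ h ∈ hists S t, ∃ a δ, labelAt t h = .inl a ∧ δ ∈ VS S a ∧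
      e = (idx S t h, some δ, idx S t (h ++ [(a, some δ)])) := by
  rw [GOf]
  simp only [Finset.mem_biUnion]
  constructor
  · rintro ⟨h, hh, hmem⟩
    cases hl : labelAt t h with
    | inl a =>
        rw [hl] at hmem
        simp only [Sum.elim_inl, Finset.mem_image] at hmem
        obtain ⟨δ, hδ, rfl⟩ := hmem
        exact ⟨h, hh, a, δ, hl, hδ, rfl⟩
    | inr Z => rw [hl] at hmem; simp at hmem
  · rintro ⟨h, hh, a, δ, hl, hδ, rfl⟩
    exact ⟨h, hh, by rw [hl]; exact Finset.mem_image_of_mem _ hδ⟩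

lemma root_lt {S t} : (GOf S t).root < (GOf S t).n := idx_lt (nil_mem_hists S t)

lemma label_idx {S t h} (hh : h ∈ hists S t) : (GOf S t).label (idx S t h) = labelAt t h := by
  show labelAt t (inv S t (idx S t h)) = labelAt t h
  rw [inv_idx hh]

lemma terminal_iff {S t h} (hw : TWF S t) (hh : h ∈ hists S t) :
    (GOf S t).IsTerminal (idx S t h) ↔ ∃ Z, labelAt t h = .inr Z := by
  constructor
  · intro hterm
    cases hl : labelAt t h with
    | inl a =>
        obtain ⟨δ, hδ⟩ := VS_nonempty (wf_inl hw hh hl)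
        exact absurd rfl (hterm _ (mem_edges.2 ⟨h, hh, a, δ, hl, hδ, rfl⟩))
    | inr Z => exact ⟨Z, rfl⟩
  · rintro ⟨Z, hl⟩ e he hfst
    obtain ⟨h', hh', a, δ, hl', _, rfl⟩ := mem_edges.1 he
    have : h' = h := idx_inj hh' hh hfst
    rw [this, hl] at hl'; exact absurd hl' (by simp)

lemma isDG {S t} (hw : TWF S t) : (GOf S t).IsDG S false := by
  refine ⟨root_lt, ?_, ?_, ?_⟩
  · rintro e he
    obtain ⟨h, hh, a, δ, hl, hδ, rfl⟩ := mem_edges.1 he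
    exact ⟨idx_lt hh, idx_lt (child_mem hh hl hδ)⟩
  · -- acyclic
    have hstep : ∀ u v, (GOf S t).step u v →
        (inv S t u).length + 1 = (inv S t v).length := by
      rintro u v ⟨l, hl⟩
      obtain ⟨h, hh, a, δ, hla, hδ, heq⟩ := mem_edges.1 hl
      obtain ⟨rfl, -, rfl⟩ := Prod.mk.injEq .. ▸ heq
      rw [inv_idx hh, inv_idx (child_mem hh hla hδ)]
      simp
    have htg : ∀ u v, Relation.TransGen (GOf S t).step u v →
        (inv S t u).length < (inv S t v).length := by
      intro u v huv
      induction huv with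
      | single h => have := hstep _ _ h; omega
      | tail _ h ih => have := hstep _ _ h; omega
    intro v hv
    exact absurd (htg v v hv) (lt_irrefl _)
  · intro v hv
    have hm := inv_mem (S := S) (t := t) hv
    by_cases hterm : (GOf S t).IsTerminal v
    · rw [if_pos hterm]
      have := (terminal_iff hw hm)
      rw [idx_inv hv] at this
      obtain ⟨Z, hZ⟩ := this.1 hterm
      exact ⟨Z, hZ, wf_inr hw hm hZ⟩
    · rw [if_neg hterm]
      have := (terminal_iff hw hm)
      rw [idx_inv hv] at this
      cases hl : labelAt t (inv S t v) with
      | inr Z => exact absurd (this.2 ⟨Z, hl⟩) hterm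
      | inl a =>
          refine ⟨a, hl, wf_inl hw hm hl, ?_, ?_⟩
          · intro l
            constructor
            · rintro ⟨w, hw'⟩
              obtain ⟨h', hh', a', δ, hl', hδ, heq⟩ := mem_edges.1 hw'
              simp only [Prod.mk.injEq] at heq
              obtain ⟨h1, h2, -⟩ := heq
              have hhv : h' = inv S t v := by rw [h1]; exact (inv_idx hh').symm
              rw [hhv, hl] at hl'
              have : a' = a := by injection hl'.symm
              subst this
              simp only [allowed, Bool.false_eq_true, if_false, Finset.union_empty,
                Finset.mem_image]
              exact ⟨δ, hδ, h2.symm⟩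
            · intro hla
              simp only [allowed, Bool.false_eq_true, if_false, Finset.union_empty,
                Finset.mem_image] at hla
              obtain ⟨δ, hδ, rfl⟩ := hla
              exact ⟨_, mem_edges.2 ⟨inv S t v, hm, a, δ, hl, hδ, by rw [idx_inv hv]⟩⟩
          · intro l w w' hw1 hw2
            obtain ⟨h1, hh1, a1, δ1, hl1, hδ1, he1⟩ := mem_edges.1 hw1
            obtain ⟨h2, hh2, a2, δ2, hl2, hδ2, he2⟩ := mem_edges.1 hw2
            simp only [Prod.mk.injEq] at he1 he2
            obtain ⟨e11, e12, e13⟩ := he1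
            obtain ⟨e21, e22, e23⟩ := he2
            have h12 : h1 = h2 := idx_inj hh1 hh2 (e11.symm.trans e21)
            subst h12
            rw [hl1] at hl2
            have ha : a1 = a2 := by injection hl2
            subst ha
            have hδ : δ1 = δ2 := by
              have := e12.symm.trans e22; injection this
            subst hδ
            rw [e13, e23]

lemma isTree {S t} : (GOf S t).IsTree := by
  constructor
  · rintro e he hcon
    obtain ⟨h, hh, a, δ, hl, hδ, rfl⟩ := mem_edges.1 he
    have := idx_inj (child_mem hh hl hδ) (nil_mem_hists S t) hcon
    simp at this
  · intro v hv hne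
    have hm : inv S t v ∈ hists S t := inv_mem hv
    have hne' : inv S t v ≠ [] := by
      intro hnil
      apply hne
      rw [← idx_inv hv, hnil]
  /- root = idx [] -/
      rfl
    have hdec : (inv S t v).dropLast ++ [(inv S t v).getLast hne'] = inv S t v :=
      List.dropLast_append_getLast hne'
    obtain ⟨hpm, a, δ, hlast, hlab, hδ⟩ := parent_mem (t := t) (by rw [hdec]; exact hm)
    have hchild : (inv S t v).dropLast ++ [(a, some δ)] = inv S t v := by
      rw [← hlast]; exact hdec
    refine ⟨(idx S t (inv S t v).dropLast, some δ, v), ⟨?_, rfl⟩, ?_⟩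
    · refine mem_edges.2 ⟨(inv S t v).dropLast, hpm, a, δ, hlab, hδ, ?_⟩
      rw [hchild, idx_inv hv]
    · rintro e ⟨he, hev⟩
      obtain ⟨h₀, hh₀, a₀, δ₀, hl₀, hδ₀, rfl⟩ := mem_edges.1 he
      have hch₀ := child_mem hh₀ hl₀ hδ₀
      have heq : h₀ ++ [(a₀, some δ₀)] = inv S t v := by
        apply idx_inj hch₀ hm
        show idx S t (h₀ ++ [(a₀, some δ₀)]) = idx S t (inv S t v)
        rw [idx_inv hv]; exact hev
      have h1 : h₀ = (inv S t v).dropLast := by rw [← heq, List.dropLast_concat]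
      have h2' : h₀ ++ [(a₀, some δ₀)] = h₀ ++ [(a, some δ)] := by
        rw [heq, ← hchild, ← h1]
      have h2 : (a₀, some δ₀) = (a, some δ) := by
        have := List.append_cancel_left h2'
        simpa using this
      have ha : a₀ = a := congrArg Prod.fst h2
      have hδδ : some δ₀ = some δ := congrArg Prod.snd h2
      simp only [Prod.mk.injEq]
      refine ⟨by rw [h1], hδδ, ?_⟩
      show idx S t (h₀ ++ [(a₀, some δ₀)]) = v
      rw [heq, idx_inv hv]

lemma chain_corr {S t} (p : List (ℕ × Option ℕ)) :
    ∀ h, h ∈ hists S t → ∀ w, (GOf S t).chainFrom (idx S t h) p w →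
    ∃ g, h ++ g ∈ hists S t ∧ w = idx S t (h ++ g) ∧ g.length = p.length ∧
      (p.filterMap fun e =>
        Sum.elim (fun a => some (a, e.2)) (fun _ => none) ((GOf S t).label e.1)) = g := by
  induction p with
  | nil =>
      intro h hh w hch
      refine ⟨[], by simpa using hh, ?_, rfl, rfl⟩
      rw [List.append_nil]
      exact hch.symm
  | cons e rest ih =>
      intro h hh w hch
      obtain ⟨he1, w₁, hedge, hrest⟩ := hch
      obtain ⟨h₀, hh₀, a, δ, hl, hδ, heq⟩ := mem_edges.1 hedge
      simp only [Prod.mk.injEq] at heq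
      obtain ⟨q1, q2, q3⟩ := heq
      have hh0 : h₀ = h := idx_inj hh₀ hh q1.symm
      subst hh0
      have hchild := child_mem hh₀ hl hδ
      rw [q3] at hrest
      obtain ⟨g₁, hg1, hg2, hg3, hg4⟩ := ih (h₀ ++ [(a, some δ)]) hchild w hrest
      refine ⟨(a, some δ) :: g₁, ?_, ?_, by simp [hg3], ?_⟩
      · rw [List.append_cons]
        exact hg1
      · rw [hg2]
        congr 1
        simp
      · rw [List.filterMap_cons, he1, label_idx hh₀, hl]
        simp only [Sum.elim_inl, q2]
        rw [hg4]

lemma depth_le {S t} : (GOf S t).depth ≤ dep S t := by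
  apply csSup_le'
  rintro m ⟨p, t', ⟨hch, hterm, ht'⟩, rfl⟩
  obtain ⟨g, hg1, hg2, hg3, hg4⟩ := chain_corr p [] (nil_mem_hists S t) t' hch
  simp only [List.nil_append] at hg1 hg3
  rw [← hg3]
  exact length_le_dep hg1

lemma complete_path_data {S t} (hw : TWF S t) {p t'}
    (hc : (GOf S t).IsCompletePath p t') :
    ∃ g Z, g ∈ hists S t ∧ labelAt t g = .inr Z ∧ (GOf S t).termSet t' = Z ∧
      (GOf S t).pathEqs p = g.toFinset := by
  obtain ⟨hch, hterm, ht'⟩ := hc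
  obtain ⟨g, hg1, hg2, hg3, hg4⟩ := chain_corr p [] (nil_mem_hists S t) t' hch
  simp only [List.nil_append] at hg1 hg2
  have hterm' : (GOf S t).IsTerminal (idx S t g) := by rw [← hg2]; exact hterm
  obtain ⟨Z, hZ⟩ := (terminal_iff hw hg1).1 hterm'
  refine ⟨g, Z, hg1, hZ, ?_, ?_⟩
  · show Sum.elim _ id ((GOf S t).label t') = Z
    rw [hg2, label_idx hg1, hZ]
    rfl
  · rw [DGraph.pathEqs, hg4]

lemma consistentE_mono {E E' : Finset (ℕ × Option ℕ)} (hsub : E ⊆ E')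
    (h : ConsistentE E') : ConsistentE E := fun p hp q hq => h p (hsub hp) q (hsub hq)

lemma mem_restrict {S : Finset Rule} {α r'} :
    r' ∈ restrict S α ↔ ∃ r ∈ S, ConsistentE (liftK r.K ∪ α) ∧ r' = r.restrict α := by
  rw [restrict]
  simp only [Finset.mem_image, Finset.mem_filter]
  constructor
  · rintro ⟨r, ⟨hr, hc⟩, rfl⟩; exact ⟨r, hr, hc, rfl⟩
  · rintro ⟨r, hr, hc, rfl⟩; exact ⟨r, ⟨hr, hc⟩, rfl⟩

lemma restrictK_anti {α α' : Finset (ℕ × Option ℕ)} (h : α ⊆ α') (r : Rule) :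
    (r.restrict α').K ⊆ (r.restrict α).K := by
  intro p hp
  rw [Rule.restrict, Finset.mem_filter] at hp ⊢
  exact ⟨hp.1, fun hc => hp.2 (h hc)⟩

lemma len_restrict_le (r : Rule) (α : Finset (ℕ × Option ℕ)) :
    (r.restrict α).len ≤ r.len := Finset.card_filter_le _ _

lemma dPar_restrict_le (S : Finset Rule) (α : Finset (ℕ × Option ℕ)) :
    dPar (restrict S α) ≤ dPar S := by
  apply Finset.sup_le
  intro r' hr'
  obtain ⟨r, hr, -, rfl⟩ := mem_restrict.1 hr'
  exact le_trans (len_restrict_le r α) (Finset.le_sup hr)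

lemma attrs_mono {S S' : Finset Rule} (h : S ⊆ S') : attrs S ⊆ attrs S' :=
  Finset.biUnion_subset_biUnion_of_subset_left _ h

lemma attrs_restrict_sub (S : Finset Rule) (α : Finset (ℕ × Option ℕ)) :
    attrs (restrict S α) ⊆ attrs S := by
  intro b hb
  rw [attrs, Finset.mem_biUnion] at hb
  obtain ⟨r', hr', hb⟩ := hb
  obtain ⟨r, hr, -, rfl⟩ := mem_restrict.1 hr'
  rw [Rule.attrs, Finset.mem_image] at hb
  obtain ⟨p, hp, rfl⟩ := hb
  rw [Rule.restrict, Finset.mem_filter] at hp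
  rw [attrs, Finset.mem_biUnion]
  exact ⟨r, hr, Finset.mem_image_of_mem _ hp.1⟩

lemma attrs_isNodeCover (S' : Finset Rule) : IsNodeCover S' (attrs S') := by
  refine ⟨subset_rfl, ?_⟩
  intro r hr hne
  obtain ⟨x, hx⟩ := hne
  exact ⟨x, Finset.mem_inter.2 ⟨hx, Finset.mem_biUnion.2 ⟨r, hr, hx⟩⟩⟩

lemma coverEx (S' : Finset Rule) : ∃ B, IsNodeCover S' B ∧ B.card = beta S' := by
  have hne : {c | ∃ B, IsNodeCover S' B ∧ B.card = c}.Nonempty :=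
    ⟨(attrs S').card, ⟨attrs S', attrs_isNodeCover S', rfl⟩⟩
  exact Nat.sInf_mem hne

def Cfun (S : Finset Rule) (α : Finset (ℕ × Option ℕ)) : Finset ℕ :=
  (coverEx (Splus (restrict S α))).choose

lemma Cfun_cover (S : Finset Rule) (α : Finset (ℕ × Option ℕ)) :
    IsNodeCover (Splus (restrict S α)) (Cfun S α) :=
  (coverEx (Splus (restrict S α))).choose_spec.1

lemma Cfun_card (S : Finset Rule) (α : Finset (ℕ × Option ℕ)) :
    (Cfun S α).card = betaPlus (restrict S α) :=
  (coverEx (Splus (restrict S α))).choose_spec.2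

lemma Cfun_sub_attrs (S : Finset Rule) (α : Finset (ℕ × Option ℕ)) :
    Cfun S α ⊆ attrs S :=
  subset_trans (Cfun_cover S α).1
    (subset_trans (attrs_mono (Finset.filter_subset _ _)) (attrs_restrict_sub S α))

lemma beta_le_card (S' : Finset Rule) : beta S' ≤ (attrs S').card :=
  Nat.sInf_le ⟨attrs S', attrs_isNodeCover S', rfl⟩

lemma betaPlus_le_B {S : Finset Rule} {α} (hα : α ∈ ESys S false) :
    betaPlus (restrict S α) ≤ betaCplus S false := by
  apply le_csSup
  · refine ⟨nPar S, ?_⟩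
    rintro b ⟨α', hα', rfl⟩
    calc betaPlus (restrict S α') = beta (Splus (restrict S α')) := rfl
      _ ≤ (attrs (Splus (restrict S α'))).card := beta_le_card _
      _ ≤ (attrs S).card := Finset.card_le_card
          (subset_trans (attrs_mono (Finset.filter_subset _ _)) (attrs_restrict_sub S α'))
  · exact ⟨α, hα, rfl⟩

def Zfun (S : Finset Rule) (α : Finset (ℕ × Option ℕ)) : Finset Rule :=
  S.filter fun r => liftK r.K ⊆ α

def inner (S : Finset Rule) (nx : Finset (ℕ × Option ℕ) → T) :
    List ℕ → Finset (ℕ × Option ℕ) → T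
  | [], α => nx α
  | b :: L, α => T.node b fun δ => inner S nx L (insert (b, some δ) α)

def outer (S : Finset Rule) : ℕ → Finset (ℕ × Option ℕ) → T
  | 0, α => T.leaf (Zfun S α)
  | k+1, α =>
      if dPar (restrict S α) = 0 then T.leaf (Zfun S α)
      else inner S (outer S k) ((Cfun S α).toList) α

lemma TWF_inner {S nx L α} (hL : ∀ b ∈ L, b ∈ attrs S)
    (hnx : ∀ α', TWF S (nx α')) : TWF S (inner S nx L α) := by
  induction L generalizing α with
  | nil => exact hnx α
  | cons b L ih =>
      exact ⟨hL b (List.mem_cons_self),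
        fun δ _ => ih (fun b' hb' => hL b' (List.mem_cons_of_mem _ hb'))⟩

lemma TWF_outer (S : Finset Rule) : ∀ k α, TWF S (outer S k α) := by
  intro k
  induction k with
  | zero => intro α; exact Finset.filter_subset _ _
  | succ k ih =>
      intro α
      rw [outer]
      split
      · exact Finset.filter_subset _ _
      · exact TWF_inner (fun b hb => Cfun_sub_attrs S α (Finset.mem_toList.1 hb)) ih

lemma dPar_decrease {S : Finset Rule} {α α' : Finset (ℕ × Option ℕ)} (hsub : α ⊆ α')
    (hcov : ∀ b ∈ Cfun S α, ∃ w, (b, w) ∈ α') (hd : dPar (restrict S α) ≠ 0) :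
    dPar (restrict S α') ≤ dPar (restrict S α) - 1 := by
  apply Finset.sup_le
  rintro r' hr'
  obtain ⟨r, hr, hcons', rfl⟩ := mem_restrict.1 hr'
  have hconsα : ConsistentE (liftK r.K ∪ α) :=
    consistentE_mono (Finset.union_subset_union_right hsub) hcons'
  have hmemα : r.restrict α ∈ restrict S α := mem_restrict.2 ⟨r, hr, hconsα, rfl⟩
  have hlenle : (r.restrict α).len ≤ dPar (restrict S α) := Finset.le_sup hmemα
  have hanti : (r.restrict α').len ≤ (r.restrict α).len :=
    Finset.card_le_card (restrictK_anti hsub r)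
  by_cases hcase : (r.restrict α).len = dPar (restrict S α)
  · have hplus : r.restrict α ∈ Splus (restrict S α) := Finset.mem_filter.2 ⟨hmemα, hcase⟩
    have hKne : ((r.restrict α).K).Nonempty := by
      rw [← Finset.card_pos]
      show 0 < (r.restrict α).len
      omega
    have hnonempty : (Rule.attrs (r.restrict α)).Nonempty := hKne.image _
    obtain ⟨b, hb⟩ := (Cfun_cover S α).2 _ hplus hnonempty
    rw [Finset.mem_inter] at hb
    obtain ⟨hb1, hb2⟩ := hb
    rw [Rule.attrs, Finset.mem_image] at hb1
    obtain ⟨p, hp, rfl⟩ := hb1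
    have hpK : p ∈ r.K ∧ (p.1, some p.2) ∉ α := by
      simpa [Rule.restrict, Finset.mem_filter] using hp
    obtain ⟨w, hw⟩ := hcov p.1 hb2
    have hval : (some p.2 : Option ℕ) = w :=
      hcons' (p.1, some p.2)
        (Finset.mem_union_left _ (Finset.mem_image_of_mem _ hpK.1))
        (p.1, w) (Finset.mem_union_right _ hw) rfl
    have hmemα' : (p.1, some p.2) ∈ α' := by rw [hval]; exact hw
    have hnotmem : p ∉ (r.restrict α').K := by
      rw [Rule.restrict, Finset.mem_filter]
      rintro ⟨-, hcon⟩
      exact hcon hmemα'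
    have hss : (r.restrict α').K ⊂ (r.restrict α).K :=
      ⟨restrictK_anti hsub r, fun hsub2 => hnotmem (hsub2 hp)⟩
    have hlt : (r.restrict α').len < dPar (restrict S α) := by
      rw [← hcase]
      exact Finset.card_lt_card hss
    omega
  · omega

def LeafP (S : Finset Rule) (t : T) (α : Finset (ℕ × Option ℕ)) : Prop :=
  ∀ h ∈ hists S t, ∀ Z, labelAt t h = .inr Z →
    Z = Zfun S (α ∪ h.toFinset) ∧ dPar (restrict S (α ∪ h.toFinset)) = 0

lemma leafP_inner {S : Finset Rule} {nx : Finset (ℕ × Option ℕ) → T} {L α}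
    (H : ∀ α', α ⊆ α' → (∀ b ∈ L, ∃ w, (b, w) ∈ α') → LeafP S (nx α') α') :
    LeafP S (inner S nx L α) α := by
  induction L generalizing α with
  | nil => exact H α subset_rfl (by simp)
  | cons b L ih =>
      intro h hh Z hZ
      rw [show inner S nx (b :: L) α
          = T.node b (fun δ => inner S nx L (insert (b, some δ) α)) from rfl] at hh hZ
      rcases mem_hists_node.1 hh with rfl | ⟨δ, hδ, h₂, hh₂, rfl⟩
      · simp [labelAt] at hZ
      · have H' : ∀ α'', insert (b, some δ) α ⊆ α'' → (∀ b' ∈ L, ∃ w, (b', w) ∈ α'') →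
            LeafP S (nx α'') α'' := by
          intro α'' h1 h2
          refine H α'' (subset_trans (Finset.subset_insert _ _) h1) ?_
          intro b' hb'
          rcases List.mem_cons.1 hb' with rfl | hb'
          · exact ⟨some δ, h1 (Finset.mem_insert_self _ _)⟩
          · exact h2 b' hb'
        have hres := ih (α := insert (b, some δ) α) H' h₂ hh₂ Z (by simpa [labelAt] using hZ)
        have heq : insert (b, some δ) α ∪ h₂.toFinset
            = α ∪ ((b, some δ) :: h₂).toFinset := by
          rw [List.toFinset_cons, Finset.insert_union, Finset.union_insert]
        rw [heq] at hres
        exact hres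

lemma leafP_outer (S : Finset Rule) :
    ∀ k α, dPar (restrict S α) ≤ k → LeafP S (outer S k α) α := by
  intro k
  induction k with
  | zero =>
      intro α hd h hh Z hZ
      rw [outer] at hh hZ
      have hnil : h = [] := mem_hists_leaf.1 hh
      subst hnil
      have hZ' : Zfun S α = Z := by simpa [labelAt] using hZ
      subst hZ'
      simp only [List.toFinset_nil, Finset.union_empty]
      exact ⟨trivial, Nat.le_zero.1 hd⟩
  | succ k ih =>
      intro α hd
      rw [outer]
      by_cases h0 : dPar (restrict S α) = 0
      · rw [if_pos h0]
        intro h hh Z hZ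
        have hnil : h = [] := mem_hists_leaf.1 hh
        subst hnil
        have hZ' : Zfun S α = Z := by simpa [labelAt] using hZ
        subst hZ'
        simp only [List.toFinset_nil, Finset.union_empty]
        exact ⟨trivial, h0⟩
      · rw [if_neg h0]
        apply leafP_inner
        intro α' hsub hcov
        apply ih α'
        have := dPar_decrease (S := S) hsub
          (fun b hb => hcov b (Finset.mem_toList.2 hb)) h0
        omega

lemma cover_not_assigned {S : Finset Rule} {α : Finset (ℕ × Option ℕ)} {b}
    (hb : b ∈ attrs (restrict S α)) : ∀ w, (b, w) ∉ α := by
  intro w hw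
  rw [attrs, Finset.mem_biUnion] at hb
  obtain ⟨r', hr', hb⟩ := hb
  obtain ⟨r, hr, hcons, rfl⟩ := mem_restrict.1 hr'
  rw [Rule.attrs, Finset.mem_image] at hb
  obtain ⟨p, hp, rfl⟩ := hb
  have hpK : p ∈ r.K ∧ (p.1, some p.2) ∉ α := by
    simpa [Rule.restrict, Finset.mem_filter] using hp
  have hval : (some p.2 : Option ℕ) = w :=
    hcons (p.1, some p.2)
      (Finset.mem_union_left _ (Finset.mem_image_of_mem _ hpK.1))
      (p.1, w) (Finset.mem_union_right _ hw) rfl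
  exact hpK.2 (by rw [hval]; exact hw)

lemma dep_inner {S : Finset Rule} {nx : Finset (ℕ × Option ℕ) → T} {L α D}
    (h1 : ∀ b ∈ L, b ∈ attrs S) (h2 : ∀ b ∈ L, ∀ w, (b, w) ∉ α) (h3 : L.Nodup)
    (h4 : α ∈ ESys S false)
    (Hnx : ∀ α', α' ∈ ESys S false → dep S (nx α') ≤ D) :
    dep S (inner S nx L α) ≤ L.length + D := by
  induction L generalizing α with
  | nil => simpa [inner] using Hnx α h4
  | cons b L ih =>
      show ((VS S b).sup fun δ => dep S (inner S nx L (insert (b, some δ) α))) + 1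
        ≤ (b :: L).length + D
      have hsup : ((VS S b).sup fun δ => dep S (inner S nx L (insert (b, some δ) α)))
          ≤ L.length + D := by
        apply Finset.sup_le
        intro δ hδ
        apply ih
        · exact fun b' hb' => h1 b' (List.mem_cons_of_mem _ hb')
        · intro b' hb' w hw
          rcases Finset.mem_insert.1 hw with heq | hw'
          · have : b' = b := congrArg Prod.fst heq
            exact (List.nodup_cons.1 h3).1 (this ▸ hb')
          · exact h2 b' (List.mem_cons_of_mem _ hb') w hw'
        · exact (List.nodup_cons.1 h3).2
        · constructor
          · intro p hp q hq hpq
            rcases Finset.mem_insert.1 hp with rfl | hp' <;>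
              rcases Finset.mem_insert.1 hq with h' | h'
            · rw [h']
            · exact absurd (show (b, q.2) ∈ α by
                have : q = (q.1, q.2) := rfl
                rw [this] at h'; rwa [← hpq] at h')
                (h2 b (List.mem_cons_self) q.2)
            · subst h'
              exact absurd (show (b, p.2) ∈ α by
                have : p = (p.1, p.2) := rfl
                rw [this] at hp'; rwa [hpq] at hp')
                (h2 b (List.mem_cons_self) p.2)
            · exact h4.1 p hp' q h' hpq
          · intro p hp
            rcases Finset.mem_insert.1 hp with rfl | hp'
            · refine ⟨h1 b (List.mem_cons_self), ?_⟩
              simp only [allowed, Bool.false_eq_true, if_false, Finset.union_empty,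
                Finset.mem_image]
              exact ⟨δ, hδ, rfl⟩
            · exact h4.2 p hp'
      have := Nat.add_le_add_right hsup 1
      simp only [List.length_cons]
      omega

lemma dep_outer (S : Finset Rule) :
    ∀ k α, α ∈ ESys S false → dep S (outer S k α) ≤ k * betaCplus S false := by
  intro k
  induction k with
  | zero => intro α hα; rw [outer]; simp [dep]
  | succ k ih =>
      intro α hα
      rw [outer]
      by_cases h0 : dPar (restrict S α) = 0
      · rw [if_pos h0]; simp [dep]
      · rw [if_neg h0]
        have hlen : ((Cfun S α).toList).length ≤ betaCplus S false := by
          rw [Finset.length_toList, Cfun_card]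
          exact betaPlus_le_B hα
        have hdep := dep_inner (S := S) (L := (Cfun S α).toList) (α := α)
          (D := k * betaCplus S false)
          (fun b hb => Cfun_sub_attrs S α (Finset.mem_toList.1 hb))
          (fun b hb w => cover_not_assigned
            (subset_trans (Cfun_cover S α).1 (attrs_mono (Finset.filter_subset _ _))
              (Finset.mem_toList.1 hb)) w)
          (Finset.nodup_toList _) hα ih
        have hmul : (k + 1) * betaCplus S false = k * betaCplus S false + betaCplus S false := by
          ring
        omega

end Aux
/-- Theorem 4(c),(e): h_AD(S) ≤ d(S)·β_AD⁺(S) and h_SR(S) ≤ d(S)·β_SR⁺(S). -/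
theorem statement_17 (S : Finset Rule) (hS : S.Nonempty) (hwf : ∀ r ∈ S, r.WF)
    (hn : 0 < nPar S) :
    h_AD S ≤ dPar S * beta_ADplus S ∧ h_SR S ≤ dPar S * beta_SRplus S := by
  classical
  set t := Aux.outer S (dPar S) ∅ with ht
  have htwf : Aux.TWF S t := Aux.TWF_outer S (dPar S) ∅
  set G := Aux.GOf S t with hG
  have hES : (∅ : Finset (ℕ × Option ℕ)) ∈ ESys S false := by
    constructor
    · intro p hp; simp at hp
    · intro p hp; simp at hp
  have hDG : G.IsDG S false := Aux.isDG htwf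
  have hTr : G.IsTree := Aux.isTree
  have hsolve : ∀ p t', G.IsCompletePath p t' → ConsistentE (G.pathEqs p) →
      (∀ r ∈ G.termSet t', liftK r.K ⊆ G.pathEqs p) ∧
      (∀ r ∈ S, r ∉ G.termSet t' → ¬ ConsistentE (liftK r.K ∪ G.pathEqs p)) := by
    intro p t' hc hcons
    obtain ⟨g, Z, hg, hZ, hterm, hpe⟩ := Aux.complete_path_data htwf hc
    have hleaf := Aux.leafP_outer S (dPar S) ∅ (Aux.dPar_restrict_le S ∅) g hg Z hZ
    rw [Finset.empty_union] at hleaf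
    obtain ⟨hZeq, hd0⟩ := hleaf
    rw [hterm, hpe]
    constructor
    · intro r hr
      rw [hZeq, Aux.Zfun, Finset.mem_filter] at hr
      exact hr.2
    · intro r hr hnZ hcontra
      have hmem : r.restrict g.toFinset ∈ restrict S g.toFinset :=
        Aux.mem_restrict.2 ⟨r, hr, hcontra, rfl⟩
      have hle : (r.restrict g.toFinset).len ≤ 0 := hd0 ▸ Finset.le_sup hmem
      have hK : ∀ q ∈ r.K, (q.1, some q.2) ∈ g.toFinset := by
        intro q hq
        by_contra hnq
        have hmm : q ∈ (r.restrict g.toFinset).K := by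
          rw [Rule.restrict]; exact Finset.mem_filter.2 ⟨hq, hnq⟩
        have hemp : (r.restrict g.toFinset).K = ∅ := Finset.card_eq_zero.1 (Nat.le_zero.1 hle)
        rw [hemp] at hmm
        simp at hmm
      apply hnZ
      rw [hZeq, Aux.Zfun, Finset.mem_filter]
      refine ⟨hr, ?_⟩
      intro q hq
      rw [liftK, Finset.mem_image] at hq
      obtain ⟨q₀, hq₀, rfl⟩ := hq
      exact hK q₀ hq₀
  have hdepth : G.depth ≤ dPar S * betaCplus S false :=
    le_trans Aux.depth_le (Aux.dep_outer S (dPar S) ∅ hES)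
  constructor
  · refine le_trans (Nat.sInf_le ⟨G, ⟨hDG, hTr, ?_⟩, rfl⟩) hdepth
    intro p t' hc hcons
    obtain ⟨c1, c2⟩ := hsolve p t' hc hcons
    exact ⟨c1, fun r hr hnZ _ => c2 r hr hnZ⟩
  · refine le_trans (Nat.sInf_le ⟨G, ⟨hDG, hTr, ?_⟩, rfl⟩) hdepth
    intro p t' hc hcons
    obtain ⟨c1, c2⟩ := hsolve p t' hc hcons
    exact ⟨c1, fun hemp r hr => c2 r hr (by rw [hemp]; simp)⟩

end DRS

end
end
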